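/- arXiv:1111.3058 — 5 statements merged into one kernel-verified Lean document; each statement's English description precedes it below -/
import Mathlib

section
/- For every natural number n ≥ 1 and every polynomial P of degree at most 2n−1, (1/π)∫_{-1}^1 P(x)/√(1−x²) dx = (1/n)∑_{k=1}^n P(cos((2k−1)π/(2n))). -/
open Real

namespace MehlerAux

open Polynomial Polynomial.Chebyshev MeasureTheory intervalIntegral Set

lemma natDegree_T_le : ∀ j : ℕ, (T ℝ j).natDegree ≤ j
  | 0 => by simp
  | 1 => by simpa using Polynomial.natDegree_X_le
  | (j+2) => by
    have h1 := natDegree_T_le j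
    have h2 := natDegree_T_le (j+1)
    have hc : ((j+2 : ℕ) : ℤ) = (j : ℤ) + 2 := by push_cast; ring
    have hc1 : ((j+1 : ℕ) : ℤ) = (j : ℤ) + 1 := by push_cast; ring
    rw [hc, T_add_two]
    refine le_trans (natDegree_sub_le _ _) (max_le ?_ ?_)
    · refine le_trans natDegree_mul_le ?_
      have hX : (2 * X : ℝ[X]).natDegree ≤ 1 :=
        le_trans natDegree_mul_le (by simp)
      rw [← hc1]
      omega
    · omega

lemma coeff_T : ∀ j : ℕ, (T ℝ (j+1 : ℕ)).coeff (j+1) = 2^j := by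
  intro j
  induction j with
  | zero => simp
  | succ j ih =>
    have hc : ((j+2 : ℕ) : ℤ) = (j : ℤ) + 2 := by push_cast; ring
    have hc1 : ((j+1 : ℕ) : ℤ) = (j : ℤ) + 1 := by push_cast; ring
    rw [hc, T_add_two, ← hc1]
    have hz : (T ℝ (j : ℕ)).coeff (j+2) = 0 :=
      coeff_eq_zero_of_natDegree_lt (lt_of_le_of_lt (natDegree_T_le j) (by omega))
    rw [Polynomial.coeff_sub, mul_assoc, Polynomial.coeff_ofNat_mul,
      Polynomial.coeff_X_mul, ih, hz]
    push_cast
    ring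

lemma II1 : IntervalIntegrable (fun x : ℝ => 1 / Real.sqrt (1 - x^2)) volume (-1) 1 := by
  have hmin : min (-1 : ℝ) 1 = -1 := by norm_num
  have hmax : max (-1 : ℝ) 1 = 1 := by norm_num
  apply intervalIntegrable_deriv_of_nonneg (g := Real.arcsin)
  · exact Real.continuous_arcsin.continuousOn
  · intro x hx
    rw [hmin, hmax] at hx
    exact Real.hasDerivAt_arcsin hx.1.ne' hx.2.ne
  · intro x hx
    positivity

lemma II_poly (P : ℝ[X]) :
    IntervalIntegrable (fun x => P.eval x / Real.sqrt (1 - x^2)) volume (-1) 1 := by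
  obtain ⟨C, hC⟩ : ∃ C, ∀ x ∈ Set.uIoc (-1:ℝ) 1, |P.eval x| ≤ C := by
    obtain ⟨C, hC⟩ := (isCompact_uIcc (a := (-1:ℝ)) (b := 1)).exists_bound_of_continuousOn
      (P.continuous.continuousOn)
    exact ⟨C, fun x hx => by simpa [Real.norm_eq_abs] using hC x (uIoc_subset_uIcc hx)⟩
  have hint : IntervalIntegrable (fun x : ℝ => C * (1 / Real.sqrt (1 - x^2))) volume (-1) 1 :=
    II1.const_mul C
  apply hint.mono_fun'
  · apply Measurable.aestronglyMeasurable
    exact (P.continuous.measurable).div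
      ((continuous_const.sub (continuous_pow 2)).measurable.sqrt)
  · filter_upwards [MeasureTheory.ae_restrict_mem measurableSet_uIoc] with x hx
    have hs : 0 ≤ Real.sqrt (1 - x^2) := Real.sqrt_nonneg _
    have hb := hC x hx
    have hCnn : 0 ≤ C := le_trans (abs_nonneg _) hb
    rcases eq_or_lt_of_le hs with h0 | h0
    · simp only [Real.norm_eq_abs, ← h0, div_zero, abs_zero, mul_one_div, zero_div]
      positivity
    · rw [Real.norm_eq_abs, abs_div, abs_of_pos h0, mul_one_div]
      gcongr

lemma integral_one_div_sqrt : ∫ x in (-1:ℝ)..1, 1 / Real.sqrt (1 - x^2) = π := by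
  rw [intervalIntegral.integral_eq_sub_of_hasDerivAt_of_le (f := Real.arcsin) (by norm_num)
    Real.continuous_arcsin.continuousOn
    (fun x hx => Real.hasDerivAt_arcsin hx.1.ne' hx.2.ne) II1]
  rw [Real.arcsin_one, Real.arcsin_neg_one]
  ring

lemma integral_T (j : ℕ) (hj : 1 ≤ j) :
    ∫ x in (-1:ℝ)..1, (T ℝ j).eval x / Real.sqrt (1 - x^2) = 0 := by
  have hj0 : (j : ℝ) ≠ 0 := Nat.cast_ne_zero.mpr (by omega)
  rw [intervalIntegral.integral_eq_sub_of_hasDerivAt_of_le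
      (f := fun x => -(Real.sin ((j : ℝ) * Real.arccos x)) / (j : ℝ)) (by norm_num)
      ?_ ?_ (II_poly _)]
  · rw [Real.arccos_one, Real.arccos_neg_one, mul_zero, Real.sin_zero,
      Real.sin_nat_mul_pi]
    simp
  · exact ((Real.continuous_sin.comp
      (continuous_const.mul Real.continuous_arccos)).neg.div_const _).continuousOn
  · intro x hx
    have hd : HasDerivAt Real.arccos (-(1 / Real.sqrt (1 - x^2))) x :=
      Real.hasDerivAt_arccos hx.1.ne' hx.2.ne
    have h1 : HasDerivAt (fun x => Real.sin ((j : ℝ) * Real.arccos x))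
        (Real.cos ((j : ℝ) * Real.arccos x) * ((j : ℝ) * -(1 / Real.sqrt (1 - x^2)))) x :=
      (Real.hasDerivAt_sin _).comp x (hd.const_mul _)
    have h2 := (h1.neg).div_const (j : ℝ)
    refine h2.congr_deriv ?_
    have hTx : (T ℝ j).eval x = Real.cos ((j : ℝ) * Real.arccos x) := by
      have h := Polynomial.Chebyshev.T_real_cos (Real.arccos x) (j : ℤ)
      rw [Real.cos_arccos (by linarith [hx.1]) (by linarith [hx.2])] at h
      push_cast at h ⊢
      exact h
    rw [hTx]
    have hs : Real.sqrt (1 - x^2) ≠ 0 := by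
      refine ne_of_gt (Real.sqrt_pos.mpr ?_)
      nlinarith [hx.1, hx.2]
    field_simp

lemma sum_cos (n j : ℕ) (hn : 1 ≤ n) (hj1 : 1 ≤ j) (hj2 : j ≤ 2*n - 1) :
    ∑ k ∈ Finset.range n, Real.cos ((j:ℝ) * ((2*(k:ℝ)+1) * π / (2*n))) = 0 := by
  have hn0 : (n : ℝ) ≠ 0 := Nat.cast_ne_zero.mpr (by omega)
  set a : ℝ := (j:ℝ) * π / (2*n) with ha
  have harg : ∀ k : ℕ, (j:ℝ) * ((2*(k:ℝ)+1) * π / (2*n)) = (2*(k:ℝ)+1)*a := by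
    intro k; rw [ha]; field_simp
  have key : ∀ k : ℕ, Real.sin (2*((k:ℝ)+1)*a) - Real.sin (2*(k:ℝ)*a)
      = 2 * Real.sin a * Real.cos ((2*(k:ℝ)+1)*a) := by
    intro k
    have e1 : 2*((k:ℝ)+1)*a = (2*(k:ℝ)+1)*a + a := by ring
    have e2 : 2*(k:ℝ)*a = (2*(k:ℝ)+1)*a - a := by ring
    rw [e1, e2, Real.sin_add, Real.sin_sub]
    ring
  have hsum : 2 * Real.sin a *
      (∑ k ∈ Finset.range n, Real.cos ((2*(k:ℝ)+1)*a)) = Real.sin (2*(n:ℝ)*a) := by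
    rw [Finset.mul_sum]
    calc ∑ k ∈ Finset.range n, 2 * Real.sin a * Real.cos ((2*(k:ℝ)+1)*a)
        = ∑ k ∈ Finset.range n,
            (Real.sin (2*((k:ℝ)+1)*a) - Real.sin (2*(k:ℝ)*a)) :=
          Finset.sum_congr rfl fun k _ => (key k).symm
      _ = Real.sin (2*(n:ℝ)*a) := by
          have h0 := Finset.sum_range_sub (f := fun k : ℕ => Real.sin (2*(k:ℝ)*a)) n
          push_cast at h0
          simpa using h0
  have h2na : 2*(n:ℝ)*a = (j:ℕ) * π := by rw [ha]; field_simp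
  have hzero : Real.sin (2*(n:ℝ)*a) = 0 := by rw [h2na, Real.sin_nat_mul_pi]
  have hjlt : (j : ℝ) < 2 * n := by exact_mod_cast (by omega : j < 2*n)
  have hapos : 0 < a := by
    rw [ha]
    have : (0:ℝ) < (j:ℝ) := by exact_mod_cast (by omega : 0 < j)
    positivity
  have halt : a < π := by
    rw [ha, div_lt_iff₀ (by positivity)]
    nlinarith [Real.pi_pos]
  have hsa : Real.sin a ≠ 0 := ne_of_gt (Real.sin_pos_of_pos_of_lt_pi hapos halt)
  have := hsum.trans hzero
  have h2 : 2 * Real.sin a ≠ 0 := by positivity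
  have hS : (∑ k ∈ Finset.range n, Real.cos ((2*(k:ℝ)+1)*a)) = 0 :=
    by
      rcases mul_eq_zero.mp this with h | h
      · exact absurd h h2
      · exact h
  calc ∑ k ∈ Finset.range n, Real.cos ((j:ℝ) * ((2*(k:ℝ)+1) * π / (2*n)))
      = ∑ k ∈ Finset.range n, Real.cos ((2*(k:ℝ)+1)*a) :=
        Finset.sum_congr rfl fun k _ => by rw [harg k]
    _ = 0 := hS

lemma mehler_T (n : ℕ) (hn : 1 ≤ n) (j : ℕ) (hj : j ≤ 2*n-1) :
    (1/π) * ∫ x in (-1:ℝ)..1, (T ℝ j).eval x / Real.sqrt (1-x^2)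
      = (1/(n:ℝ)) * ∑ k ∈ Finset.range n,
          (T ℝ j).eval (Real.cos ((2*(k:ℝ)+1) * π / (2*n))) := by
  have hn0 : (n : ℝ) ≠ 0 := Nat.cast_ne_zero.mpr (by omega)
  rcases Nat.eq_zero_or_pos j with h0 | h1
  · subst h0
    simp only [Nat.cast_zero, T_zero, Polynomial.eval_one]
    rw [integral_one_div_sqrt]
    rw [Finset.sum_const, Finset.card_range]
    field_simp
    simp [nsmul_eq_mul]
  · have hL : ∫ x in (-1:ℝ)..1, (T ℝ j).eval x / Real.sqrt (1-x^2) = 0 := integral_T j h1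
    have hR : ∑ k ∈ Finset.range n, (T ℝ j).eval (Real.cos ((2*(k:ℝ)+1) * π / (2*n))) = 0 := by
      have : ∀ k : ℕ, (T ℝ j).eval (Real.cos ((2*(k:ℝ)+1) * π / (2*n)))
          = Real.cos ((j:ℝ) * ((2*(k:ℝ)+1) * π / (2*n))) := by
        intro k
        have h := Polynomial.Chebyshev.T_real_cos ((2*(k:ℝ)+1) * π / (2*n)) (j : ℤ)
        push_cast at h
        exact h
      rw [Finset.sum_congr rfl fun k _ => this k]
      exact sum_cos n j hn h1 hj
    rw [hL, hR]
    simp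

end MehlerAux

open MehlerAux Polynomial Polynomial.Chebyshev

/-- Mehler's Chebyshev-type quadrature formula. -/
theorem mehler_quadrature (n : ℕ) (hn : 1 ≤ n) (P : Polynomial ℝ)
    (hP : P.natDegree ≤ 2 * n - 1) :
    (1 / π) * ∫ x in (-1 : ℝ)..1, P.eval x / Real.sqrt (1 - x ^ 2)
      = (1 / (n : ℝ)) * ∑ k ∈ Finset.range n,
          P.eval (Real.cos ((2 * (k : ℝ) + 1) * π / (2 * n))) := by
  have hn0 : (n : ℝ) ≠ 0 := Nat.cast_ne_zero.mpr (by omega)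
  suffices h : ∀ d : ℕ, d ≤ 2*n-1 → ∀ P : Polynomial ℝ, P.natDegree ≤ d →
      (1 / π) * ∫ x in (-1 : ℝ)..1, P.eval x / Real.sqrt (1 - x ^ 2)
        = (1 / (n : ℝ)) * ∑ k ∈ Finset.range n,
            P.eval (Real.cos ((2 * (k : ℝ) + 1) * π / (2 * n))) by
    exact h (2*n-1) le_rfl P hP
  intro d
  induction d with
  | zero =>
    intro _ P hP0
    obtain ⟨a, rfl⟩ : ∃ a, P = Polynomial.C a := ⟨P.coeff 0, (Polynomial.eq_C_of_natDegree_le_zero hP0)⟩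
    simp only [Polynomial.eval_C]
    have : (fun x : ℝ => a / Real.sqrt (1 - x^2)) = fun x => a * (1 / Real.sqrt (1 - x^2)) := by
      funext x; ring
    rw [this, intervalIntegral.integral_const_mul, integral_one_div_sqrt,
      Finset.sum_const, Finset.card_range]
    field_simp
    rw [nsmul_eq_mul]; ring
  | succ d ih =>
    intro hd P hPd
    set c : ℝ := P.coeff (d+1) / 2^d with hc
    set Q : Polynomial ℝ := P - Polynomial.C c * T ℝ (d+1 : ℕ) with hQdef
    have hTd : (T ℝ (d+1 : ℕ)).natDegree ≤ d+1 := natDegree_T_le (d+1)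
    have hQ : Q.natDegree ≤ d := by
      rw [Polynomial.natDegree_le_iff_coeff_eq_zero]
      intro m hm
      simp only [hQdef, Polynomial.coeff_sub, Polynomial.coeff_C_mul]
      rcases eq_or_lt_of_le (Nat.succ_le_of_lt hm) with hm' | hm'
      · rw [← hm', coeff_T d, hc]
        field_simp
        simp
      · rw [coeff_eq_zero_of_natDegree_lt (lt_of_le_of_lt hPd hm'),
          coeff_eq_zero_of_natDegree_lt (lt_of_le_of_lt hTd hm')]
        ring
    have hQres := ih (by omega) Q hQ
    have hTres := mehler_T n hn (d+1) (by omega)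
    have hPeq : P = Q + Polynomial.C c * T ℝ (d+1 : ℕ) := by
      rw [hQdef]; ring
    rw [hPeq]
    have heval : ∀ x : ℝ, (Q + Polynomial.C c * T ℝ (d+1 : ℕ)).eval x
        = Q.eval x + c * (T ℝ (d+1 : ℕ)).eval x := by
      intro x; simp
    have hIeq : ∫ x in (-1:ℝ)..1, (Q + Polynomial.C c * T ℝ (d+1 : ℕ)).eval x / Real.sqrt (1 - x^2)
        = (∫ x in (-1:ℝ)..1, Q.eval x / Real.sqrt (1 - x^2))
          + c * ∫ x in (-1:ℝ)..1, (T ℝ (d+1 : ℕ)).eval x / Real.sqrt (1 - x^2) := by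
      rw [← intervalIntegral.integral_const_mul,
        ← intervalIntegral.integral_add (II_poly Q) ((II_poly _).const_mul c)]
      apply intervalIntegral.integral_congr
      intro x _
      simp only [Polynomial.eval_add, Polynomial.eval_mul, Polynomial.eval_C]
      ring
    rw [hIeq]
    have hSeq : ∑ k ∈ Finset.range n,
        (Q + Polynomial.C c * T ℝ (d+1 : ℕ)).eval (Real.cos ((2 * (k : ℝ) + 1) * π / (2 * n)))
        = (∑ k ∈ Finset.range n, Q.eval (Real.cos ((2 * (k : ℝ) + 1) * π / (2 * n))))
          + c * ∑ k ∈ Finset.range n,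
              (T ℝ (d+1 : ℕ)).eval (Real.cos ((2 * (k : ℝ) + 1) * π / (2 * n))) := by
      rw [Finset.mul_sum, ← Finset.sum_add_distrib]
      exact Finset.sum_congr rfl fun k _ => by rw [heval]
    rw [hSeq, mul_add, mul_add, hQres]
    congr 1
    calc 1/π * (c * ∫ x in (-1:ℝ)..1, (T ℝ (d+1 : ℕ)).eval x / Real.sqrt (1 - x^2))
        = c * (1/π * ∫ x in (-1:ℝ)..1, (T ℝ (d+1 : ℕ)).eval x / Real.sqrt (1 - x^2)) := by
          ring
      _ = c * (1/(n:ℝ) * ∑ k ∈ Finset.range n,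
            (T ℝ (d+1 : ℕ)).eval (Real.cos ((2 * (k : ℝ) + 1) * π / (2 * n)))) := by
          rw [hTres]
      _ = 1/(n:ℝ) * (c * ∑ k ∈ Finset.range n,
            (T ℝ (d+1 : ℕ)).eval (Real.cos ((2 * (k : ℝ) + 1) * π / (2 * n)))) := by
          ring
end

section
/- The Chebyshev weight ρ(y) = 1/(π√(1−y²)) satisfies ρ(y) = −ρ(S_k(y))·S_k'(y) for all y ∈ (x_{k+1}, 1) and every k ≥ 0, where S_0(y) = −y, S_1(y) = √(1−y²), S_2(y) = (y+√(1−y²))/√2, and in general S_k is the reflection determined by P_{2^k}∘S_k = −P_{2^k}. Consequently ρ ∈ W_n for every n. -/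
open Real

noncomputable def xseq : ℕ → ℝ
  | 0 => -1
  | n + 1 => Real.sqrt ((1 + xseq n) / 2)
/-- `Q p` is the Chebyshev polynomial of degree `2^p`, the `p`-fold composite of `2x²-1`. -/
noncomputable def Q (p : ℕ) : ℝ → ℝ := (fun t : ℝ => 2 * t ^ 2 - 1)^[p]
/-- `S` is the reflection associated to `P_{2^k}` on `[x_{k+1}, 1]`. -/
def IsReflection (k : ℕ) (S : ℝ → ℝ) : Prop :=
  Set.BijOn S (Set.Icc (xseq (k + 1)) 1) (Set.Icc (xseq k) (xseq (k + 1))) ∧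
  ∀ y ∈ Set.Icc (xseq (k + 1)) 1, Q k (S y) = -(Q k y)
/-- The weight class `W_n` (relative to the reflections `S k`). -/
noncomputable def memW (S : ℕ → ℝ → ℝ) (n : ℕ) (ρ : ℝ → ℝ) : Prop :=
  (∀ x ∈ Set.Ioo (-1 : ℝ) 1, 0 ≤ ρ x) ∧
  ((∫ x in (-1 : ℝ)..1, ρ x) = 1) ∧
  ∀ k < n, ∀ y ∈ Set.Ioo (xseq (k + 1)) 1, ρ y = -(ρ (S k y) * deriv (S k) y)

/-- The Chebyshev weight. -/
noncomputable def cheb (y : ℝ) : ℝ := 1 / (π * Real.sqrt (1 - y ^ 2))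

/-! ### Auxiliary material -/

noncomputable def ak (k : ℕ) : ℝ := π / 2 ^ k

lemma ak_pos (k : ℕ) : 0 < ak k := div_pos pi_pos (by positivity)

lemma ak_le_pi (k : ℕ) : ak k ≤ π := by
  have h : (1:ℝ) ≤ 2 ^ k := one_le_pow₀ one_le_two
  exact div_le_self pi_pos.le h

lemma ak_succ (k : ℕ) : ak (k + 1) = ak k / 2 := by
  rw [ak, ak, pow_succ, div_div]

lemma two_pow_mul_ak (k : ℕ) : (2 : ℝ) ^ k * ak k = π := by
  rw [ak, mul_div_cancel₀ _ (by positivity : (2:ℝ) ^ k ≠ 0)]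

lemma xseq_eq (k : ℕ) : xseq k = Real.cos (ak k) := by
  induction k with
  | zero => simp [xseq, ak]
  | succ k ih =>
    rw [xseq, ih, ak_succ, Real.cos_half (by linarith [ak_pos k, pi_pos]) (ak_le_pi k)]

lemma Q_cos (k : ℕ) (θ : ℝ) : Q k (Real.cos θ) = Real.cos (2 ^ k * θ) := by
  induction k generalizing θ with
  | zero => simp [Q]
  | succ k ih =>
    have : Q (k + 1) (Real.cos θ)
        = Q k (2 * Real.cos θ ^ 2 - 1) := by
      rw [Q, Function.iterate_succ, Function.comp_apply]; rfl
    rw [this, ← Real.cos_two_mul, ih, pow_succ]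
    ring_nf

lemma Q_eq (k : ℕ) {y : ℝ} (h1 : -1 ≤ y) (h2 : y ≤ 1) :
    Q k y = Real.cos (2 ^ k * Real.arccos y) := by
  have := Q_cos k (Real.arccos y)
  rwa [Real.cos_arccos h1 h2] at this

lemma arccos_le {y a : ℝ} (ha0 : 0 ≤ a) (hy1 : y ≤ 1) (h : Real.cos a ≤ y) :
    Real.arccos y ≤ a := by
  by_contra hc
  push_neg at hc
  have := Real.cos_lt_cos_of_nonneg_of_le_pi ha0 (Real.arccos_le_pi y) hc
  rw [Real.cos_arccos ((Real.neg_one_le_cos a).trans h) hy1] at this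
  linarith

lemma le_arccos {y a : ℝ} (hapi : a ≤ π) (hy1 : -1 ≤ y) (h : y ≤ Real.cos a) :
    a ≤ Real.arccos y := by
  by_contra hc
  push_neg at hc
  have := Real.cos_lt_cos_of_nonneg_of_le_pi (Real.arccos_nonneg y) hapi hc
  rw [Real.cos_arccos hy1 (h.trans (Real.cos_le_one a))] at this
  linarith

lemma injOn_Q (k : ℕ) : Set.InjOn (Q k) (Set.Icc (xseq k) (xseq (k + 1))) := by
  intro y1 hy1 y2 hy2 heq
  rw [xseq_eq, xseq_eq, ak_succ] at hy1 hy2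
  have bnd : ∀ z : ℝ, Real.cos (ak k) ≤ z → z ≤ Real.cos (ak k / 2) →
      (-1 ≤ z ∧ z ≤ 1) ∧ ak k / 2 ≤ Real.arccos z ∧ Real.arccos z ≤ ak k := by
    intro z h1 h2
    have hz1 : -1 ≤ z := (Real.neg_one_le_cos _).trans h1
    have hz2 : z ≤ 1 := h2.trans (Real.cos_le_one _)
    exact ⟨⟨hz1, hz2⟩, le_arccos (by linarith [ak_le_pi k, ak_pos k]) hz1 h2,
      arccos_le (ak_pos k).le hz2 h1⟩
  obtain ⟨⟨h1a, h1b⟩, h1c, h1d⟩ := bnd y1 hy1.1 hy1.2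
  obtain ⟨⟨h2a, h2b⟩, h2c, h2d⟩ := bnd y2 hy2.1 hy2.2
  rw [Q_eq k h1a h1b, Q_eq k h2a h2b] at heq
  have hp : (0:ℝ) < 2 ^ k := by positivity
  have key : (2:ℝ) ^ k * Real.arccos y1 = 2 ^ k * Real.arccos y2 := by
    apply Real.injOn_cos _ _ heq <;>
    · constructor
      · exact mul_nonneg (by positivity) (Real.arccos_nonneg _)
      · rw [← two_pow_mul_ak k]
        apply mul_le_mul_of_nonneg_left _ hp.le
        first
          | exact h1d
          | exact h2d
  have := mul_left_cancel₀ (ne_of_gt hp) key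
  rw [← Real.cos_arccos h1a h1b, ← Real.cos_arccos h2a h2b, this]

/-- The explicit reflection. -/
noncomputable def Sx (k : ℕ) (y : ℝ) : ℝ :=
  xseq k * y + Real.sqrt (1 - xseq k ^ 2) * Real.sqrt (1 - y ^ 2)

lemma sqrt_one_sub_xseq (k : ℕ) : Real.sqrt (1 - xseq k ^ 2) = Real.sin (ak k) := by
  rw [xseq_eq, Real.sin_eq_sqrt_one_sub_cos_sq (ak_pos k).le (ak_le_pi k)]

lemma Sx_eq_cos (k : ℕ) {y : ℝ} (h1 : -1 ≤ y) (h2 : y ≤ 1) :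
    Sx k y = Real.cos (ak k - Real.arccos y) := by
  rw [Real.cos_sub, Real.cos_arccos h1 h2, Real.sin_arccos, Sx, sqrt_one_sub_xseq, xseq_eq]

lemma key_lemma (k : ℕ) {y : ℝ} (hy : y ∈ Set.Ioo (xseq (k + 1)) 1) :
    Sx k y ∈ Set.Icc (xseq k) (xseq (k + 1)) ∧
    Q k (Sx k y) = -(Q k y) ∧
    HasDerivAt (Sx k)
      (xseq k - Real.sqrt (1 - xseq k ^ 2) * y / Real.sqrt (1 - y ^ 2)) y ∧
    cheb y = -(cheb (Sx k y) *
      (xseq k - Real.sqrt (1 - xseq k ^ 2) * y / Real.sqrt (1 - y ^ 2))) := by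
  obtain ⟨hyl, hyr⟩ := hy
  have hx1 : xseq (k + 1) = Real.cos (ak k / 2) := by rw [xseq_eq, ak_succ]
  have hym : -1 ≤ y := le_of_lt (lt_of_le_of_lt (by rw [hx1]; exact Real.neg_one_le_cos _) hyl)
  set a := ak k with ha
  set θ := Real.arccos y with hθ
  have hθ0 : 0 < θ := Real.arccos_pos.2 hyr
  have hθa2 : θ ≤ a / 2 := by
    apply arccos_le (by linarith [ak_pos k]) hyr.le
    rw [← hx1]; exact hyl.le
  have hapos := ak_pos k
  have hapi := ak_le_pi k
  have hs0 : 0 < a - θ := by linarith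
  have hspi : a - θ < π := by linarith
  have hsin : 0 < Real.sin (a - θ) := Real.sin_pos_of_pos_of_lt_pi hs0 hspi
  have hym' : -1 < y := by
    rcases lt_or_eq_of_le hym with h | h
    · exact h
    · exfalso
      have hpi : θ = π := by rw [hθ, ← h, Real.arccos_neg_one]
      linarith [pi_pos]
  have hu2 : 0 < 1 - y ^ 2 := by
    nlinarith [mul_pos (by linarith : (0:ℝ) < 1 - y) (by linarith : (0:ℝ) < 1 + y)]
  have hu : 0 < Real.sqrt (1 - y ^ 2) := Real.sqrt_pos.2 hu2
  have hSx : Sx k y = Real.cos (a - θ) := Sx_eq_cos k hym hyr.le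
  have hv : Real.sqrt (1 - Sx k y ^ 2) = Real.sin (a - θ) := by
    rw [hSx, ← Real.sin_sq, Real.sqrt_sq hsin.le]
  have hv2 : Real.sin (a - θ) =
      Real.sqrt (1 - xseq k ^ 2) * y - xseq k * Real.sqrt (1 - y ^ 2) := by
    rw [Real.sin_sub, sqrt_one_sub_xseq, xseq_eq, hθ, Real.sin_arccos,
      Real.cos_arccos hym hyr.le]
  refine ⟨?_, ?_, ?_, ?_⟩
  · rw [hSx, xseq_eq, hx1]
    constructor
    · exact Real.cos_le_cos_of_nonneg_of_le_pi hs0.le hapi (by linarith)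
    · exact Real.cos_le_cos_of_nonneg_of_le_pi (by linarith) (by linarith) (by linarith)
  · rw [hSx, Q_cos, Q_eq k hym hyr.le, mul_sub, two_pow_mul_ak, Real.cos_pi_sub, ← hθ]
  · have h1 : HasDerivAt (fun z : ℝ => 1 - z ^ 2) (-(2 * y)) y := by
      simpa using (hasDerivAt_pow 2 y).const_sub 1
    have h2 : HasDerivAt (fun z : ℝ => Real.sqrt (1 - z ^ 2))
        (-(2 * y) / (2 * Real.sqrt (1 - y ^ 2))) y := h1.sqrt (ne_of_gt hu2)
    have h3 : HasDerivAt (fun z : ℝ => xseq k * z) (xseq k) y := by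
      simpa using (hasDerivAt_id y).const_mul (xseq k)
    have h4 := h3.add (h2.const_mul (Real.sqrt (1 - xseq k ^ 2)))
    refine HasDerivAt.congr_deriv h4 ?_
    field_simp
    ring
  · have hvpos : 0 < Real.sqrt (1 - xseq k ^ 2) * y - xseq k * Real.sqrt (1 - y ^ 2) := by
      rw [← hv2]; exact hsin
    rw [cheb, cheb, hv, hv2]
    have h5 : Real.sqrt (1 - xseq k ^ 2) * y - xseq k * Real.sqrt (1 - y ^ 2) ≠ 0 :=
      ne_of_gt hvpos
    field_simp
    rw [← neg_div, neg_sub, div_self (by rw [mul_comm y, mul_comm (Real.sqrt (1 - y ^ 2))]; exact h5)]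

lemma refl_deriv (k : ℕ) (S : ℝ → ℝ) (hS : IsReflection k S) :
    ∀ y ∈ Set.Ioo (xseq (k + 1)) 1, cheb y = -(cheb (S y) * deriv S y) := by
  obtain ⟨hbij, hQ⟩ := hS
  have hagree : ∀ z ∈ Set.Ioo (xseq (k + 1)) 1, S z = Sx k z := by
    intro z hz
    have hzIcc : z ∈ Set.Icc (xseq (k + 1)) 1 := ⟨hz.1.le, hz.2.le⟩
    obtain ⟨hmem, hQx, _, _⟩ := key_lemma k hz
    exact injOn_Q k (hbij.mapsTo hzIcc) hmem (by rw [hQ z hzIcc, hQx])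
  intro y hy
  obtain ⟨_, _, hder, hid⟩ := key_lemma k hy
  have hev : S =ᶠ[nhds y] Sx k :=
    Filter.eventuallyEq_of_mem (isOpen_Ioo.mem_nhds hy) hagree
  rw [hagree y hy, hev.deriv_eq, hder.deriv]
  exact hid

lemma cheb_integral : (∫ x in (-1 : ℝ)..1, cheb x) = 1 := by
  have h1 : (∫ x in (-1 : ℝ)..1, cheb x) = ∫ x in Set.Ioo (-1 : ℝ) 1, cheb x := by
    rw [intervalIntegral.integral_of_le (by norm_num),
      MeasureTheory.integral_Ioc_eq_integral_Ioo]
  have himg : Real.sin '' Set.Ioo (-(π / 2)) (π / 2) = Set.Ioo (-1 : ℝ) 1 := by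
    ext z
    constructor
    · rintro ⟨x, hx, rfl⟩
      have hxIcc : x ∈ Set.Icc (-(π / 2)) (π / 2) := Set.Ioo_subset_Icc_self hx
      have hl : Real.sin (-(π / 2)) < Real.sin x :=
        Real.strictMonoOn_sin (Set.left_mem_Icc.2 (by linarith [pi_pos])) hxIcc hx.1
      have hr : Real.sin x < Real.sin (π / 2) :=
        Real.strictMonoOn_sin hxIcc (Set.right_mem_Icc.2 (by linarith [pi_pos])) hx.2
      simp only [Real.sin_neg, Real.sin_pi_div_two] at hl hr
      exact ⟨by linarith, hr⟩
    · intro hz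
      exact ⟨Real.arcsin z,
        ⟨Real.neg_pi_div_two_lt_arcsin.2 hz.1, Real.arcsin_lt_pi_div_two.2 hz.2⟩,
        Real.sin_arcsin hz.1.le hz.2.le⟩
  have hinj : Set.InjOn Real.sin (Set.Ioo (-(π / 2)) (π / 2)) :=
    Real.injOn_sin.mono Set.Ioo_subset_Icc_self
  have hsub := MeasureTheory.integral_image_eq_integral_abs_deriv_smul
    measurableSet_Ioo (fun x _ => (Real.hasDerivAt_sin x).hasDerivWithinAt) hinj cheb
  have hpt : Set.EqOn (fun x => |Real.cos x| • cheb (Real.sin x)) (fun _ => π⁻¹)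
      (Set.Ioo (-(π / 2)) (π / 2)) := by
    intro x hx
    have hc : 0 < Real.cos x := Real.cos_pos_of_mem_Ioo hx
    simp only [cheb, smul_eq_mul]
    rw [abs_of_pos hc, ← Real.cos_sq', Real.sqrt_sq hc.le]
    field_simp
  rw [h1, ← himg, hsub, MeasureTheory.setIntegral_congr_fun measurableSet_Ioo hpt,
    MeasureTheory.setIntegral_const, MeasureTheory.measureReal_def, Real.volume_Ioo, smul_eq_mul]
  rw [ENNReal.toReal_ofReal (by linarith [pi_pos])]
  have : (π / 2 - -(π / 2)) = π := by ring
  rw [this, mul_inv_cancel₀ pi_ne_zero]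

/-- The Chebyshev weight satisfies `ρ(y) = -ρ(S_k(y))·S_k'(y)` on `(x_{k+1},1)` for every
reflection `S_k`; consequently it belongs to `W_n` for every `n`. -/
theorem cheb_mem_W :
    (∀ (k : ℕ) (S : ℝ → ℝ), IsReflection k S →
      ∀ y ∈ Set.Ioo (xseq (k + 1)) 1, cheb y = -(cheb (S y) * deriv S y)) ∧
    (∀ (n : ℕ) (S : ℕ → ℝ → ℝ), (∀ k < n, IsReflection k (S k)) → memW S n cheb) := by
  constructor
  · exact fun k S hS => refl_deriv k S hS
  · intro n S hS
    refine ⟨?_, cheb_integral, ?_⟩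
    · intro x _
      rw [cheb]
      positivity
    · intro k hk y hy
      exact refl_deriv k (S k) (hS k hk) y hy
end

section
/- If ρ ∈ W_n, then ∫_{x_n}^1 ρ(y) dy = 2^{−n}. -/
open Real Set MeasureTheory

namespace ReflAux

/-- The angle `π / 2^k`. -/
noncomputable def A (k : ℕ) : ℝ := π / 2 ^ k

lemma A_pos (k : ℕ) : 0 < A k := by unfold A; positivity

lemma A_le_pi (k : ℕ) : A k ≤ π :=
  div_le_self pi_pos.le (one_le_pow₀ one_le_two)

lemma A_succ (k : ℕ) : A (k + 1) = A k / 2 := by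
  unfold A; rw [pow_succ]; ring

lemma xseq_eq_cos (k : ℕ) : xseq k = Real.cos (A k) := by
  induction k with
  | zero => simp [xseq, A]
  | succ k ih =>
    have h0 := A_pos k
    have h1 := A_le_pi k
    rw [xseq, ih, A_succ, Real.cos_half (by linarith) h1]

lemma two_pow_mul_A (k : ℕ) : (2 : ℝ) ^ k * A k = π := by
  unfold A
  field_simp

lemma Q_cos (p : ℕ) (θ : ℝ) : Q p (Real.cos θ) = Real.cos (2 ^ p * θ) := by
  induction p generalizing θ with
  | zero => simp [Q]
  | succ p ih =>
    have h : Q (p + 1) (Real.cos θ) = Q p (2 * Real.cos θ ^ 2 - 1) := by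
      simp [Q, Function.iterate_succ_apply]
    rw [h, ← Real.cos_two_mul, ih]
    congr 1
    ring

lemma arccos_le {y c : ℝ} (hy1 : -1 ≤ y) (hy2 : y ≤ 1) (hc0 : 0 ≤ c)
    (h : Real.cos c ≤ y) : Real.arccos y ≤ c := by
  by_contra hlt
  push_neg at hlt
  have := Real.cos_lt_cos_of_nonneg_of_le_pi hc0 (Real.arccos_le_pi y) hlt
  rw [Real.cos_arccos hy1 hy2] at this
  linarith

lemma le_arccos {y c : ℝ} (hy1 : -1 ≤ y) (hy2 : y ≤ 1) (hcπ : c ≤ π)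
    (h : y ≤ Real.cos c) : c ≤ Real.arccos y := by
  by_contra hlt
  push_neg at hlt
  have := Real.cos_lt_cos_of_nonneg_of_le_pi (Real.arccos_nonneg y) hcπ hlt
  rw [Real.cos_arccos hy1 hy2] at this
  linarith

lemma arccos_lt {y c : ℝ} (hy1 : -1 ≤ y) (hy2 : y ≤ 1) (hc0 : 0 ≤ c)
    (h : Real.cos c < y) : Real.arccos y < c := by
  by_contra hle
  push_neg at hle
  have := Real.cos_le_cos_of_nonneg_of_le_pi hc0 (Real.arccos_le_pi y) hle
  rw [Real.cos_arccos hy1 hy2] at this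
  linarith

lemma lt_arccos {y c : ℝ} (hy1 : -1 ≤ y) (hy2 : y ≤ 1) (hcπ : c ≤ π)
    (h : y < Real.cos c) : c < Real.arccos y := by
  by_contra hle
  push_neg at hle
  have := Real.cos_le_cos_of_nonneg_of_le_pi (Real.arccos_nonneg y) hcπ hle
  rw [Real.cos_arccos hy1 hy2] at this
  linarith

lemma xseq_mem (k : ℕ) : xseq k ∈ Icc (-1 : ℝ) 1 := by
  rw [xseq_eq_cos]
  exact ⟨Real.neg_one_le_cos _, Real.cos_le_one _⟩

lemma xseq_lt_succ (k : ℕ) : xseq k < xseq (k + 1) := by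
  rw [xseq_eq_cos, xseq_eq_cos, A_succ]
  exact Real.cos_lt_cos_of_nonneg_of_le_pi (by linarith [A_pos k]) (A_le_pi k)
    (by linarith [A_pos k])

lemma xseq_succ_nonneg (k : ℕ) : 0 ≤ xseq (k + 1) := by
  rw [xseq_eq_cos, A_succ]
  apply Real.cos_nonneg_of_mem_Icc
  constructor
  · linarith [A_pos k, pi_pos]
  · linarith [A_le_pi k]

lemma xseq_succ_lt_one (k : ℕ) : xseq (k + 1) < 1 := by
  rw [xseq_eq_cos]
  have := Real.cos_lt_cos_of_nonneg_of_le_pi le_rfl (A_le_pi (k + 1)) (A_pos (k + 1))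
  simpa using this

/-- The explicit reflection. -/
noncomputable def T (k : ℕ) (y : ℝ) : ℝ :=
  xseq k * y + Real.sqrt (1 - xseq k ^ 2) * Real.sqrt (1 - y ^ 2)

lemma sqrt_one_sub_sq_cos {θ : ℝ} (h0 : 0 ≤ θ) (hπ : θ ≤ π) :
    Real.sqrt (1 - Real.cos θ ^ 2) = Real.sin θ := by
  rw [← Real.sin_sq, Real.sqrt_sq (Real.sin_nonneg_of_nonneg_of_le_pi h0 hπ)]

lemma T_cos (k : ℕ) {θ : ℝ} (h0 : 0 ≤ θ) (hπ : θ ≤ π) :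
    T k (Real.cos θ) = Real.cos (A k - θ) := by
  rw [T, xseq_eq_cos, sqrt_one_sub_sq_cos h0 hπ,
    sqrt_one_sub_sq_cos (A_pos k).le (A_le_pi k), Real.cos_sub]

/-- `Q k` is injective on `[x_k, x_{k+1}]`. -/
lemma Q_injOn (k : ℕ) : InjOn (Q k) (Icc (xseq k) (xseq (k + 1))) := by
  intro u hu v hv huv
  have key : ∀ w, w ∈ Icc (xseq k) (xseq (k + 1)) →
      w = Real.cos (Real.arccos w) ∧ Real.arccos w ∈ Icc (A (k + 1)) (A k) := by
    intro w hw
    have hw1 : -1 ≤ w := le_trans (xseq_mem k).1 hw.1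
    have hw2 : w ≤ 1 := le_trans hw.2 (xseq_mem (k + 1)).2
    refine ⟨(Real.cos_arccos hw1 hw2).symm, ?_, ?_⟩
    · exact le_arccos hw1 hw2 (A_le_pi (k + 1))
        (by rw [← xseq_eq_cos]; exact hw.2)
    · exact arccos_le hw1 hw2 (A_pos k).le (by rw [← xseq_eq_cos]; exact hw.1)
  obtain ⟨hu', hub⟩ := key u hu
  obtain ⟨hv', hvb⟩ := key v hv
  rw [hu', hv', Q_cos, Q_cos] at huv
  have h2 : (0 : ℝ) < 2 ^ k := by positivity
  have hmemu : 2 ^ k * Real.arccos u ∈ Icc 0 π := by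
    constructor
    · exact mul_nonneg h2.le (Real.arccos_nonneg u)
    · rw [← two_pow_mul_A k]
      exact mul_le_mul_of_nonneg_left hub.2 h2.le
  have hmemv : 2 ^ k * Real.arccos v ∈ Icc 0 π := by
    constructor
    · exact mul_nonneg h2.le (Real.arccos_nonneg v)
    · rw [← two_pow_mul_A k]
      exact mul_le_mul_of_nonneg_left hvb.2 h2.le
  have heq := Real.injOn_cos hmemu hmemv huv
  have harc : Real.arccos u = Real.arccos v :=
    mul_left_cancel₀ (by positivity : (2:ℝ)^k ≠ 0) heq
  rw [hu', hv', harc]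

lemma arccos_bounds (k : ℕ) {y : ℝ} (hy : y ∈ Icc (xseq (k + 1)) 1) :
    (-1 ≤ y ∧ y ≤ 1) ∧ y = Real.cos (Real.arccos y) ∧
      Real.arccos y ∈ Icc 0 (A k / 2) := by
  have hy1 : -1 ≤ y := le_trans (xseq_mem (k + 1)).1 hy.1
  refine ⟨⟨hy1, hy.2⟩, (Real.cos_arccos hy1 hy.2).symm, Real.arccos_nonneg y, ?_⟩
  rw [← A_succ]
  exact arccos_le hy1 hy.2 (A_pos (k + 1)).le (by rw [← xseq_eq_cos]; exact hy.1)

/-- The explicit reflection maps into `[x_k, x_{k+1}]` and negates `Q k`. -/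
lemma T_spec (k : ℕ) {y : ℝ} (hy : y ∈ Icc (xseq (k + 1)) 1) :
    T k y ∈ Icc (xseq k) (xseq (k + 1)) ∧ Q k (T k y) = -(Q k y) := by
  obtain ⟨⟨hy1, hy2⟩, hcos, hθ0, hθle⟩ := arccos_bounds k hy
  set θ := Real.arccos y with hθ
  have hπ : θ ≤ π := Real.arccos_le_pi y
  have hT : T k y = Real.cos (A k - θ) := by
    conv_lhs => rw [hcos]
    exact T_cos k hθ0 hπ
  have hA0 := A_pos k
  have hAπ := A_le_pi k
  constructor
  · rw [hT, xseq_eq_cos, xseq_eq_cos, A_succ]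
    constructor
    · exact Real.cos_le_cos_of_nonneg_of_le_pi (by linarith) hAπ (by linarith)
    · exact Real.cos_le_cos_of_nonneg_of_le_pi (by linarith) (by linarith) (by linarith)
  · rw [hT, Q_cos, mul_sub, two_pow_mul_A, Real.cos_pi_sub]
    conv_rhs => rw [hcos, Q_cos]

/-- On `[x_{k+1}, 1]` the abstract reflection coincides with `T k`. -/
lemma S_eq_T {k : ℕ} {S : ℝ → ℝ} (hS : IsReflection k S) {y : ℝ}
    (hy : y ∈ Icc (xseq (k + 1)) 1) : S y = T k y := by
  apply Q_injOn k (hS.1.mapsTo hy) (T_spec k hy).1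
  rw [hS.2 y hy, (T_spec k hy).2]

lemma T_image (k : ℕ) : T k '' Ioo (xseq (k + 1)) 1 = Ioo (xseq k) (xseq (k + 1)) := by
  have hA0 := A_pos k
  have hAπ := A_le_pi k
  apply Set.Subset.antisymm
  · rintro _ ⟨y, hy, rfl⟩
    have hy' : y ∈ Icc (xseq (k + 1)) 1 := ⟨hy.1.le, hy.2.le⟩
    obtain ⟨⟨hy1, hy2⟩, hcos, hθ0, hθle⟩ := arccos_bounds k hy'
    set θ := Real.arccos y with hθdef
    have hθpos : 0 < θ := Real.arccos_pos.2 hy.2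
    have hθlt : θ < A k / 2 := by
      rw [← A_succ]
      exact arccos_lt hy1 hy2 (A_pos (k + 1)).le (by rw [← xseq_eq_cos]; exact hy.1)
    have hT : T k y = Real.cos (A k - θ) := by
      conv_lhs => rw [hcos]
      exact T_cos k hθ0 (Real.arccos_le_pi y)
    rw [hT, xseq_eq_cos, xseq_eq_cos, A_succ]
    constructor
    · exact Real.cos_lt_cos_of_nonneg_of_le_pi (by linarith) hAπ (by linarith)
    · exact Real.cos_lt_cos_of_nonneg_of_le_pi (by linarith) (by linarith) (by linarith)
  · rintro u hu
    have hu1 : -1 ≤ u := le_trans (xseq_mem k).1 hu.1.le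
    have hu2 : u ≤ 1 := le_trans hu.2.le (xseq_mem (k + 1)).2
    set φ := Real.arccos u with hφdef
    have hφπ : φ ≤ π := Real.arccos_le_pi u
    have hφ1 : A k / 2 < φ := by
      rw [← A_succ]
      exact lt_arccos hu1 hu2 (A_le_pi (k + 1)) (by rw [← xseq_eq_cos]; exact hu.2)
    have hφ2 : φ < A k := arccos_lt hu1 hu2 hA0.le (by rw [← xseq_eq_cos]; exact hu.1)
    refine ⟨Real.cos (A k - φ), ?_, ?_⟩
    · rw [xseq_eq_cos, A_succ]
      constructor
      · exact Real.cos_lt_cos_of_nonneg_of_le_pi (by linarith) (by linarith) (by linarith)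
      · have := Real.cos_lt_cos_of_nonneg_of_le_pi le_rfl (by linarith : A k - φ ≤ π)
          (by linarith : (0:ℝ) < A k - φ)
        simpa using this
    · rw [T_cos k (by linarith) (by linarith)]
      rw [show A k - (A k - φ) = φ by ring]
      exact Real.cos_arccos hu1 hu2

lemma T_injOn (k : ℕ) : InjOn (T k) (Ioo (xseq (k + 1)) 1) := by
  intro u hu v hv huv
  have hu' : u ∈ Icc (xseq (k + 1)) 1 := ⟨hu.1.le, hu.2.le⟩
  have hv' : v ∈ Icc (xseq (k + 1)) 1 := ⟨hv.1.le, hv.2.le⟩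
  obtain ⟨⟨hu1, hu2⟩, hucos, hu0, hule⟩ := arccos_bounds k hu'
  obtain ⟨⟨hv1, hv2⟩, hvcos, hv0, hvle⟩ := arccos_bounds k hv'
  have hA0 := A_pos k
  have hAπ := A_le_pi k
  rw [hucos, hvcos, T_cos k hu0 (Real.arccos_le_pi u),
    T_cos k hv0 (Real.arccos_le_pi v)] at huv
  have := Real.injOn_cos
    (show A k - Real.arccos u ∈ Icc 0 π from ⟨by linarith, by linarith⟩)
    (show A k - Real.arccos v ∈ Icc 0 π from ⟨by linarith, by linarith⟩) huv
  have harc : Real.arccos u = Real.arccos v := by linarith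
  rw [hucos, hvcos, harc]

/-- The derivative of `T k`, in the exact shape produced by the chain rule. -/
noncomputable def T' (k : ℕ) (y : ℝ) : ℝ :=
  xseq k * 1 + Real.sqrt (1 - xseq k ^ 2) * (-(2 * y ^ 1) / (2 * Real.sqrt (1 - y ^ 2)))

lemma one_sub_sq_pos {k : ℕ} {y : ℝ} (hy : y ∈ Ioo (xseq (k + 1)) 1) :
    0 < 1 - y ^ 2 := by
  have h0 : 0 ≤ y := le_trans (xseq_succ_nonneg k) hy.1.le
  nlinarith [hy.2]

lemma T_hasDerivAt (k : ℕ) {y : ℝ} (hy : y ∈ Ioo (xseq (k + 1)) 1) :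
    HasDerivAt (T k) (T' k y) y := by
  have hpos := one_sub_sq_pos hy
  have h1 : HasDerivAt (fun x : ℝ => 1 - x ^ 2) (-(2 * y ^ 1)) y :=
    (hasDerivAt_pow 2 y).const_sub 1
  have h2 := h1.sqrt hpos.ne'
  have h3 : HasDerivAt (fun x : ℝ => xseq k * x) (xseq k * 1) y :=
    (hasDerivAt_id y).const_mul (xseq k)
  exact h3.add (h2.const_mul (Real.sqrt (1 - xseq k ^ 2)))

lemma T'_nonpos (k : ℕ) {y : ℝ} (hy : y ∈ Ioo (xseq (k + 1)) 1) : T' k y ≤ 0 := by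
  have hpos := one_sub_sq_pos hy
  set s := Real.sqrt (1 - y ^ 2) with hs
  have hs0 : 0 < s := Real.sqrt_pos.2 hpos
  have hssq : s ^ 2 = 1 - y ^ 2 := Real.sq_sqrt hpos.le
  set c := Real.sqrt (1 - xseq k ^ 2) with hc
  have hxk := xseq_mem k
  have hc0 : 0 ≤ c := Real.sqrt_nonneg _
  have hcsq : c ^ 2 = 1 - xseq k ^ 2 := Real.sq_sqrt (by nlinarith [hxk.1, hxk.2])
  have hy0 : 0 ≤ y := le_trans (xseq_succ_nonneg k) hy.1.le
  have hxy : xseq k ≤ y := le_trans (xseq_lt_succ k).le hy.1.le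
  have key : xseq k * s ≤ c * y := by
    rcases le_or_gt (xseq k) 0 with h | h
    · have : xseq k * s ≤ 0 := mul_nonpos_of_nonpos_of_nonneg h hs0.le
      have : 0 ≤ c * y := mul_nonneg hc0 hy0
      linarith [mul_nonpos_of_nonpos_of_nonneg h hs0.le]
    · nlinarith [sq_nonneg (c * y - xseq k * s), sq_nonneg (c * y + xseq k * s),
        mul_nonneg hc0 hy0, mul_nonneg h.le hs0.le]
  rw [T', ← hs, ← hc]
  have : c * (-(2 * y ^ 1) / (2 * s)) = -(c * y) / s := by
    field_simp
  rw [this, neg_div]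
  have hle : xseq k ≤ c * y / s := (le_div_iff₀ hs0).2 (by linarith)
  linarith

end ReflAux

open ReflAux

/-- If `ρ ∈ W_n` then `∫_{x_n}^1 ρ = 2^{-n}`. -/
theorem integral_tail_of_memW (n : ℕ) (S : ℕ → ℝ → ℝ)
    (hS : ∀ k < n, IsReflection k (S k)) (ρ : ℝ → ℝ) (hρ : memW S n ρ) :
    (∫ y in (xseq n)..1, ρ y) = 1 / 2 ^ n := by
  obtain ⟨-, hone, hrefl⟩ := hρ
  -- interval integrability on [-1, 1]
  have hInt : IntervalIntegrable ρ volume (-1) 1 := by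
    by_contra h
    rw [intervalIntegral.integral_undef h] at hone
    norm_num at hone
  have hIntSub : ∀ a b : ℝ, a ∈ Icc (-1 : ℝ) 1 → b ∈ Icc (-1 : ℝ) 1 →
      IntervalIntegrable ρ volume a b := by
    intro a b ha hb
    apply hInt.mono_set
    apply Set.uIcc_subset_uIcc <;> rw [Set.uIcc_of_le (by norm_num : (-1:ℝ) ≤ 1)]
    exacts [ha, hb]
  -- the key reflection step
  have step : ∀ k < n, (∫ y in (xseq k)..(xseq (k + 1)), ρ y)
      = ∫ y in (xseq (k + 1))..1, ρ y := by
    intro k hk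
    have hS' := hS k hk
    have h1 : xseq k ≤ xseq (k + 1) := (xseq_lt_succ k).le
    have h2 : xseq (k + 1) ≤ 1 := (xseq_succ_lt_one k).le
    rw [intervalIntegral.integral_of_le h1, intervalIntegral.integral_of_le h2,
      integral_Ioc_eq_integral_Ioo, integral_Ioc_eq_integral_Ioo]
    rw [← T_image k]
    rw [MeasureTheory.integral_image_eq_integral_abs_deriv_smul measurableSet_Ioo
      (fun y hy => (T_hasDerivAt k hy).hasDerivWithinAt) (T_injOn k) ρ]
    apply MeasureTheory.setIntegral_congr_fun measurableSet_Ioo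
    intro y hy
    show |T' k y| • ρ (T k y) = ρ y
    have hy' : y ∈ Icc (xseq (k + 1)) 1 := ⟨hy.1.le, hy.2.le⟩
    have hd : deriv (S k) y = T' k y := by
      have hev : S k =ᶠ[nhds y] T k := by
        filter_upwards [isOpen_Ioo.mem_nhds hy] with z hz
        exact S_eq_T hS' ⟨hz.1.le, hz.2.le⟩
      rw [hev.deriv_eq, (T_hasDerivAt k hy).deriv]
    have hid := hrefl k hk y hy
    rw [S_eq_T hS' hy', hd] at hid
    have habs : |T' k y| = -(T' k y) := abs_of_nonpos (T'_nonpos k hy)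
    rw [smul_eq_mul, habs, hid]
    ring
  -- induction
  have main : ∀ k, k ≤ n → (∫ y in (xseq k)..1, ρ y) = 1 / 2 ^ k := by
    intro k
    induction k with
    | zero =>
      intro _
      simpa [xseq] using hone
    | succ k ih =>
      intro hkn
      have hk : k < n := hkn
      have hprev := ih hk.le
      have hsplit : (∫ y in (xseq k)..(xseq (k + 1)), ρ y)
          + (∫ y in (xseq (k + 1))..1, ρ y) = ∫ y in (xseq k)..1, ρ y := by
        apply intervalIntegral.integral_add_adjacent_intervals
        · exact hIntSub _ _ (xseq_mem k) (xseq_mem (k + 1))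
        · exact hIntSub _ _ (xseq_mem (k + 1)) (by norm_num)
      rw [step k hk] at hsplit
      rw [hprev] at hsplit
      have : (∫ y in (xseq (k + 1))..1, ρ y) = 1 / 2 ^ k / 2 := by linarith
      rw [this, pow_succ]
      ring
  exact main n le_rfl
end

section
/- Let ρ ≥ 0 on [-1,1] with ∫_{-1}^1 ρ = 1, ρ(y) = ρ(−y) for all y, and ρ(y) = ρ(√(1−y²))·y/√(1−y²) for y ∈ (0,1). Then for every integrable function f: ∫_{-1}^1 f(x)ρ(x)dx = 4∫_{1/√2}^1 ((f(y) + f(−y) + f(√(1−y²)) + f(−√(1−y²)))/4)·ρ(y)dy. -/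
open MeasureTheory

/-- The case `n = 2`: for `ρ ∈ W_2` (symmetric and reflection-invariant for
`S_1(y) = √(1-y²)`), `∫_{-1}^1 f ρ = 4 ∫_{1/√2}^1 (R_1 ∘ R_0)(f) ρ`. -/
theorem W2_weight_identity (ρ f : ℝ → ℝ)
    (hρint : IntegrableOn ρ (Set.Icc (-1 : ℝ) 1))
    (hρ0 : ∀ x ∈ Set.Icc (-1 : ℝ) 1, 0 ≤ ρ x)
    (hρ1 : (∫ x in (-1 : ℝ)..1, ρ x) = 1)
    (hsym : ∀ y ∈ Set.Icc (-1 : ℝ) 1, ρ y = ρ (-y))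
    (hrefl : ∀ y ∈ Set.Ioo (0 : ℝ) 1,
      ρ y = ρ (Real.sqrt (1 - y ^ 2)) * y / Real.sqrt (1 - y ^ 2))
    (hf : IntegrableOn f (Set.Icc (-1 : ℝ) 1))
    (hfρ : IntegrableOn (fun x => f x * ρ x) (Set.Icc (-1 : ℝ) 1)) :
    (∫ x in (-1 : ℝ)..1, f x * ρ x)
      = 4 * ∫ y in (1 / Real.sqrt 2 : ℝ)..1,
          ((f y + f (-y) + f (Real.sqrt (1 - y ^ 2)) + f (-(Real.sqrt (1 - y ^ 2)))) / 4)
            * ρ y := by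
  have h2 : (0:ℝ) < Real.sqrt 2 := Real.sqrt_pos.2 (by norm_num)
  set c : ℝ := 1 / Real.sqrt 2 with hc
  have hc0 : 0 < c := by positivity
  have hcsq : c ^ 2 = 1 / 2 := by
    rw [hc, div_pow, one_pow, Real.sq_sqrt (by norm_num : (0:ℝ) ≤ 2)]
  have hc1 : c < 1 := by nlinarith
  set φ : ℝ → ℝ := fun y => Real.sqrt (1 - y ^ 2) with hφ
  -- basic facts about φ on Ioo c 1
  have hmem : ∀ y ∈ Set.Ioo c 1, 0 < 1 - y ^ 2 ∧ φ y ∈ Set.Ioo 0 c := by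
    intro y hy
    obtain ⟨hy1, hy2⟩ := hy
    have hy0 : 0 < y := hc0.trans hy1
    have h1 : 0 < 1 - y ^ 2 := by nlinarith
    have h2' : 1 - y ^ 2 < 1 / 2 := by nlinarith
    refine ⟨h1, Real.sqrt_pos.2 h1, ?_⟩
    have hcs : Real.sqrt (1/2) = c := by
      rw [show (1/2:ℝ) = c ^ 2 from hcsq.symm, Real.sqrt_sq hc0.le]
    calc φ y < Real.sqrt (1/2) := Real.sqrt_lt_sqrt h1.le h2'
    _ = c := hcs
  have hderiv : ∀ y ∈ Set.Ioo c 1,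
      HasDerivWithinAt φ (-(y / Real.sqrt (1 - y ^ 2))) (Set.Ioo c 1) y := by
    intro y hy
    have h1 := (hmem y hy).1
    have hs : Real.sqrt (1 - y ^ 2) ≠ 0 := ne_of_gt (Real.sqrt_pos.2 h1)
    have hinner : HasDerivAt (fun y : ℝ => 1 - y ^ 2) (-(2 * y)) y := by
      simpa using ((hasDerivAt_pow 2 y).const_sub 1)
    have hcomp := (Real.hasDerivAt_sqrt (ne_of_gt h1)).comp y hinner
    have : HasDerivAt φ (-(y / Real.sqrt (1 - y ^ 2))) y := by
      refine hcomp.congr_deriv ?_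
      field_simp
    exact this.hasDerivWithinAt
  have hinj : Set.InjOn φ (Set.Ioo c 1) := by
    intro a ha b hb hab
    have h1a := (hmem a ha).1
    have h1b := (hmem b hb).1
    have ha0 : 0 < a := hc0.trans ha.1
    have hb0 : 0 < b := hc0.trans hb.1
    have : 1 - a ^ 2 = 1 - b ^ 2 := by
      have := congrArg (· ^ 2) hab
      simpa [hφ, Real.sq_sqrt h1a.le, Real.sq_sqrt h1b.le] using this
    nlinarith
  have himg : φ '' Set.Ioo c 1 = Set.Ioo 0 c := by
    apply Set.Subset.antisymm
    · rintro _ ⟨y, hy, rfl⟩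
      exact (hmem y hy).2
    · rintro u ⟨hu0, hu1⟩
      have hu2 : u ^ 2 < 1 / 2 := by nlinarith
      have h1u : 0 ≤ 1 - u ^ 2 := by nlinarith
      refine ⟨Real.sqrt (1 - u ^ 2), ⟨?_, ?_⟩, ?_⟩
      · have hsq : (Real.sqrt (1 - u ^ 2)) ^ 2 = 1 - u ^ 2 := Real.sq_sqrt h1u
        nlinarith [Real.sqrt_nonneg (1 - u ^ 2)]
      · have hsq : (Real.sqrt (1 - u ^ 2)) ^ 2 = 1 - u ^ 2 := Real.sq_sqrt h1u
        nlinarith [Real.sqrt_nonneg (1 - u ^ 2)]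
      · show Real.sqrt (1 - (Real.sqrt (1 - u ^ 2)) ^ 2) = u
        rw [Real.sq_sqrt h1u]
        simp [Real.sqrt_sq hu0.le]
  -- the substituted integrand equals the target integrand on Ioo c 1
  have hEq : ∀ y ∈ Set.Ioo c 1,
      |(-(y / Real.sqrt (1 - y ^ 2)))| • ((f (φ y) + f (-φ y)) * ρ (φ y))
        = (f (φ y) + f (-φ y)) * ρ y := by
    intro y hy
    have h1 := (hmem y hy).1
    have hy0 : 0 < y := hc0.trans hy.1
    have hs : (0:ℝ) < Real.sqrt (1 - y ^ 2) := Real.sqrt_pos.2 h1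
    have hrefly := hrefl y ⟨hy0, hy.2⟩
    rw [abs_neg, abs_of_nonneg (div_nonneg hy0.le (Real.sqrt_nonneg _)), smul_eq_mul]
    rw [hrefly]
    show y / Real.sqrt (1 - y ^ 2) * ((f (φ y) + f (-φ y)) * ρ (Real.sqrt (1 - y ^ 2)))
      = (f (φ y) + f (-φ y)) * (ρ (Real.sqrt (1 - y ^ 2)) * y / Real.sqrt (1 - y ^ 2))
    field_simp
  -- integrability of (f x + f (-x)) * ρ x on [0,1]
  have hρsym' : Set.EqOn (fun x => f (-x) * ρ (-x)) (fun x => f (-x) * ρ x) (Set.Icc (0:ℝ) 1) := by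
    intro x hx
    have : x ∈ Set.Icc (-1:ℝ) 1 := ⟨by linarith [hx.1], hx.2⟩
    simp only
    rw [← hsym x this]
  have hneg : IntegrableOn (fun x => f (-x) * ρ (-x)) (Set.Icc (0:ℝ) 1) := by
    have h1 : IntegrableOn (fun x => f x * ρ x) (Set.Icc (-1:ℝ) 0) :=
      hfρ.mono_set (Set.Icc_subset_Icc le_rfl (by norm_num))
    have hemb : MeasurableEmbedding (Neg.neg : ℝ → ℝ) :=
      (Homeomorph.neg ℝ).measurableEmbedding
    have hset : ((Neg.neg : ℝ → ℝ) ⁻¹' Set.Icc (-1:ℝ) 0) = Set.Icc 0 1 := by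
      ext x
      simp only [Set.mem_preimage, Set.mem_Icc]
      constructor <;> intro h <;> constructor <;> linarith [h.1, h.2]
    have := ((Measure.measurePreserving_neg (volume : Measure ℝ)).integrableOn_comp_preimage
      hemb (f := fun x => f x * ρ x)).2 h1
    rw [hset] at this
    exact this
  have hnegρ : IntegrableOn (fun x => f (-x) * ρ x) (Set.Icc (0:ℝ) 1) :=
    hneg.congr_fun hρsym' measurableSet_Icc
  have hposρ : IntegrableOn (fun x => f x * ρ x) (Set.Icc (0:ℝ) 1) :=
    hfρ.mono_set (Set.Icc_subset_Icc (by norm_num) le_rfl)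
  have hsum : IntegrableOn (fun x => (f x + f (-x)) * ρ x) (Set.Icc (0:ℝ) 1) := by
    have h : IntegrableOn (fun x => f x * ρ x + f (-x) * ρ x) (Set.Icc (0:ℝ) 1) :=
      hposρ.add hnegρ
    exact h.congr_fun (fun x _ => by ring) measurableSet_Icc
  -- change of variables
  have hCV : ∫ x in Set.Ioo (0:ℝ) c, (f x + f (-x)) * ρ x
      = ∫ y in Set.Ioo c 1, (f (φ y) + f (-φ y)) * ρ y := by
    rw [← himg,
      integral_image_eq_integral_abs_deriv_smul measurableSet_Ioo hderiv hinj]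
    exact setIntegral_congr_fun measurableSet_Ioo hEq
  have hI : IntegrableOn (fun y => (f (φ y) + f (-φ y)) * ρ y) (Set.Ioo c 1) := by
    have h0 : IntegrableOn (fun x => (f x + f (-x)) * ρ x) (Set.Ioo 0 c) :=
      hsum.mono_set (fun x hx => ⟨hx.1.le, hx.2.le.trans hc1.le⟩)
    rw [← himg,
      integrableOn_image_iff_integrableOn_abs_deriv_smul measurableSet_Ioo hderiv hinj] at h0
    exact h0.congr_fun hEq measurableSet_Ioo
  -- interval-integrability facts
  have hII1 : IntervalIntegrable (fun x => f x * ρ x) volume (-1) 0 := by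
    rw [intervalIntegrable_iff_integrableOn_Ioc_of_le (by norm_num)]
    exact hfρ.mono_set (fun x hx => ⟨hx.1.le, hx.2.trans (by norm_num)⟩)
  have hII2 : IntervalIntegrable (fun x => f x * ρ x) volume 0 1 := by
    rw [intervalIntegrable_iff_integrableOn_Ioc_of_le (by norm_num)]
    exact hposρ.mono_set Set.Ioc_subset_Icc_self
  have hIInegρ : IntervalIntegrable (fun x => f (-x) * ρ x) volume 0 1 := by
    rw [intervalIntegrable_iff_integrableOn_Ioc_of_le (by norm_num)]
    exact hnegρ.mono_set Set.Ioc_subset_Icc_self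
  have hIIsum1 : IntervalIntegrable (fun x => (f x + f (-x)) * ρ x) volume 0 c := by
    rw [intervalIntegrable_iff_integrableOn_Ioc_of_le hc0.le]
    exact hsum.mono_set (fun x hx => ⟨hx.1.le, hx.2.trans hc1.le⟩)
  have hIIsum2 : IntervalIntegrable (fun x => (f x + f (-x)) * ρ x) volume c 1 := by
    rw [intervalIntegrable_iff_integrableOn_Ioc_of_le hc1.le]
    exact hsum.mono_set (fun x hx => ⟨(hc0.trans_le hx.1.le).le, hx.2⟩)
  have hIIφ : IntervalIntegrable (fun y => (f (φ y) + f (-φ y)) * ρ y) volume c 1 := by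
    rw [intervalIntegrable_iff_integrableOn_Ioc_of_le hc1.le]
    exact hI.congr_set_ae Ioo_ae_eq_Ioc.symm
  -- main computation
  have step1 : (∫ x in (-1:ℝ)..1, f x * ρ x)
      = (∫ x in (-1:ℝ)..0, f x * ρ x) + ∫ x in (0:ℝ)..1, f x * ρ x :=
    (intervalIntegral.integral_add_adjacent_intervals hII1 hII2).symm
  have step2 : (∫ x in (-1:ℝ)..0, f x * ρ x) = ∫ x in (0:ℝ)..1, f (-x) * ρ x := by
    have := intervalIntegral.integral_comp_neg (a := (0:ℝ)) (b := 1)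
      (f := fun x => f x * ρ x)
    simp only [neg_zero, neg_neg] at this
    rw [← this]
    exact intervalIntegral.integral_congr (by
      intro x hx
      rw [Set.uIcc_of_le (by norm_num : (0:ℝ) ≤ 1)] at hx
      exact hρsym' hx)
  have step3 : (∫ x in (0:ℝ)..1, f (-x) * ρ x) + (∫ x in (0:ℝ)..1, f x * ρ x)
      = ∫ x in (0:ℝ)..1, (f x + f (-x)) * ρ x := by
    rw [← intervalIntegral.integral_add hIInegρ hII2]
    exact intervalIntegral.integral_congr (fun x _ => by ring)
  have step4 : (∫ x in (0:ℝ)..1, (f x + f (-x)) * ρ x)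
      = (∫ x in (0:ℝ)..c, (f x + f (-x)) * ρ x)
        + ∫ x in c..1, (f x + f (-x)) * ρ x :=
    (intervalIntegral.integral_add_adjacent_intervals hIIsum1 hIIsum2).symm
  have step5 : (∫ x in (0:ℝ)..c, (f x + f (-x)) * ρ x)
      = ∫ y in c..1, (f (φ y) + f (-φ y)) * ρ y := by
    rw [intervalIntegral.integral_of_le hc0.le, integral_Ioc_eq_integral_Ioo, hCV,
      intervalIntegral.integral_of_le hc1.le, integral_Ioc_eq_integral_Ioo]
  have step6 : (∫ y in c..1, (f (φ y) + f (-φ y)) * ρ y)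
      + (∫ x in c..1, (f x + f (-x)) * ρ x)
      = 4 * ∫ y in c..1, ((f y + f (-y) + f (φ y) + f (-φ y)) / 4) * ρ y := by
    rw [← intervalIntegral.integral_const_mul, ← intervalIntegral.integral_add hIIφ hIIsum2]
    exact intervalIntegral.integral_congr (fun x _ => by ring)
  calc (∫ x in (-1:ℝ)..1, f x * ρ x)
      = (∫ x in (0:ℝ)..1, f (-x) * ρ x) + ∫ x in (0:ℝ)..1, f x * ρ x := by
        rw [step1, step2]
    _ = ∫ x in (0:ℝ)..1, (f x + f (-x)) * ρ x := step3
    _ = (∫ y in c..1, (f (φ y) + f (-φ y)) * ρ y)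
        + ∫ x in c..1, (f x + f (-x)) * ρ x := by rw [step4, step5]
    _ = 4 * ∫ y in c..1, ((f y + f (-y) + f (φ y) + f (-φ y)) / 4) * ρ y := step6
end

section
/- Let ρ ∈ W_n and let X = {t_1 < t_2 < … < t_m} ⊂ (−1,1) be a finite set with X ∩ [x_n, 1] ≠ ∅ and S_k(X ∩ [x_{k+1}, 1]) = X ∩ [x_k, x_{k+1}] for all k = 0,1,…,n−1. Then for every polynomial P of degree at most 2^n − 1, ∫_{-1}^1 P(x)ρ(x)dx = (1/m)∑_{k=1}^m P(t_k). -/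
lemma xseq_zero : xseq 0 = -1 := rfl
lemma xseq_succ (n : ℕ) : xseq (n+1) = Real.sqrt ((1 + xseq n) / 2) := rfl

lemma xseq_mem (k : ℕ) : -1 ≤ xseq k ∧ xseq k < 1 := by
  induction k with
  | zero => norm_num [xseq_zero]
  | succ n ih =>
    rw [xseq_succ]
    constructor
    · linarith [Real.sqrt_nonneg ((1 + xseq n)/2)]
    · have : Real.sqrt ((1 + xseq n)/2) < Real.sqrt 1 :=
        Real.sqrt_lt_sqrt (by linarith [ih.1]) (by linarith [ih.2])
      simpa using this

lemma xseq_succ_nonneg (k : ℕ) : 0 ≤ xseq (k+1) := Real.sqrt_nonneg _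

lemma xseq_one : xseq 1 = 0 := by
  rw [xseq_succ, xseq_zero]; norm_num

lemma d_xseq (k : ℕ) : 2 * (xseq (k+1))^2 - 1 = xseq k := by
  rw [xseq_succ, Real.sq_sqrt (by linarith [(xseq_mem k).1] : (0:ℝ) ≤ (1 + xseq k)/2)]
  ring

lemma xseq_lt_succ (k : ℕ) : xseq k < xseq (k+1) := by
  rcases lt_or_ge (xseq k) 0 with h | h
  · exact lt_of_lt_of_le h (xseq_succ_nonneg k)
  · nlinarith [d_xseq k, (xseq_mem k).2, xseq_succ_nonneg k, (xseq_mem (k+1)).2]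

lemma xseq_lt_one (k : ℕ) : xseq k < 1 := (xseq_mem k).2

lemma Q_succ (k : ℕ) (t : ℝ) : Q (k+1) t = Q k (2 * t^2 - 1) := by
  simp [Q, Function.iterate_succ_apply]

lemma Q_zero_apply (t : ℝ) : Q 0 t = t := rfl

-- strict monotonicity of Q k on [xseq k, 1] and endpoint values
lemma Q_xseq_self (k : ℕ) : Q k (xseq k) = -1 := by
  induction k with
  | zero => simp [Q_zero_apply, xseq_zero]
  | succ n ih => rw [Q_succ, d_xseq]; exact ih

lemma Q_one (k : ℕ) : Q k 1 = 1 := by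
  induction k with
  | zero => rfl
  | succ n ih => rw [Q_succ]; norm_num [ih]

lemma Q_xseq_succ (k : ℕ) : Q k (xseq (k+1)) = 0 := by
  induction k with
  | zero => simp [Q_zero_apply, xseq_one]
  | succ n ih => rw [Q_succ, d_xseq]; exact ih

lemma Q_strictMonoOn (k : ℕ) : StrictMonoOn (Q k) (Set.Icc (xseq k) 1) := by
  induction k with
  | zero =>
    intro a _ b _ hab; simpa [Q_zero_apply] using hab
  | succ n ih =>
    intro a ha b hb hab
    rw [Q_succ, Q_succ]
    have h0 : 0 ≤ xseq (n+1) := xseq_succ_nonneg n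
    have hmem : ∀ c ∈ Set.Icc (xseq (n+1)) 1, 2*c^2 - 1 ∈ Set.Icc (xseq n) 1 := by
      intro c hc
      constructor
      · rw [← d_xseq n]; nlinarith [hc.1]
      · nlinarith [hc.2, hc.1]
    exact ih (hmem a ha) (hmem b hb) (by nlinarith [ha.1, hb.1])

lemma Q_mem_Ioo (k : ℕ) {y : ℝ} (hy : y ∈ Set.Ioo (xseq (k+1)) 1) :
    Q k y ∈ Set.Ioo (0:ℝ) 1 := by
  have h1 : xseq (k+1) ∈ Set.Icc (xseq k) 1 := ⟨(xseq_lt_succ k).le, (xseq_lt_one (k+1)).le⟩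
  have hy' : y ∈ Set.Icc (xseq k) 1 := ⟨le_trans (xseq_lt_succ k).le (le_of_lt hy.1), hy.2.le⟩
  constructor
  · have := Q_strictMonoOn k h1 hy' hy.1
    rwa [Q_xseq_succ] at this
  · have := Q_strictMonoOn k hy' (Set.right_mem_Icc.mpr (xseq_lt_one k).le) hy.2
    rwa [Q_one] at this

lemma refl_mem_Ioo {k : ℕ} {S : ℝ → ℝ} (hS : IsReflection k S) {y : ℝ}
    (hy : y ∈ Set.Ioo (xseq (k+1)) 1) : S y ∈ Set.Ioo (xseq k) (xseq (k+1)) := by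
  have hyI : y ∈ Set.Icc (xseq (k+1)) 1 := ⟨hy.1.le, hy.2.le⟩
  have hmem : S y ∈ Set.Icc (xseq k) (xseq (k+1)) := hS.1.mapsTo hyI
  have hQ : Q k (S y) = -(Q k y) := hS.2 y hyI
  have hQy := Q_mem_Ioo k hy
  have hsub : Set.Icc (xseq k) (xseq (k+1)) ⊆ Set.Icc (xseq k) 1 :=
    Set.Icc_subset_Icc le_rfl (xseq_lt_one (k+1)).le
  constructor
  · rcases eq_or_lt_of_le hmem.1 with h | h
    · exfalso; rw [← h, Q_xseq_self] at hQ; linarith [hQy.2]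
    · exact h
  · rcases eq_or_lt_of_le hmem.2 with h | h
    · exfalso; rw [h, Q_xseq_succ] at hQ; linarith [hQy.1]
    · exact h

noncomputable def phi (u : ℝ) : ℝ := Real.sqrt ((1 + u) / 2)
def dd (t : ℝ) : ℝ := 2 * t^2 - 1

lemma phi_xseq (k : ℕ) : phi (xseq k) = xseq (k+1) := rfl

lemma dd_phi {u : ℝ} (hu : -1 ≤ u) : dd (phi u) = u := by
  unfold dd phi
  rw [Real.sq_sqrt (by linarith : (0:ℝ) ≤ (1+u)/2)]
  ring

lemma phi_dd {t : ℝ} (ht : 0 ≤ t) : phi (dd t) = t := by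
  unfold dd phi
  rw [show (1 + (2*t^2 - 1))/2 = t^2 by ring, Real.sqrt_sq ht]

lemma phi_nonneg (u : ℝ) : 0 ≤ phi u := Real.sqrt_nonneg _

lemma phi_mono {u v : ℝ} (h1 : -1 ≤ u) (h2 : u ≤ v) : phi u ≤ phi v :=
  Real.sqrt_le_sqrt (by linarith)

lemma phi_strict {u v : ℝ} (h1 : -1 ≤ u) (h2 : u < v) : phi u < phi v :=
  Real.sqrt_lt_sqrt (by linarith) (by linarith)

lemma dd_mono {u v : ℝ} (h1 : 0 ≤ u) (h2 : u ≤ v) : dd u ≤ dd v := by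
  unfold dd; nlinarith

lemma hasDerivAt_phi {u : ℝ} (hu : -1 < u) : HasDerivAt phi (1 / (4 * phi u)) u := by
  have h1 : HasDerivAt (fun u : ℝ => (1 + u) / 2) (1/2) u := by
    simpa using ((hasDerivAt_id u).const_add 1).div_const 2
  have hne : (1+u)/2 ≠ 0 := by
    intro h
    have : (1:ℝ) + u = 0 := by
      rcases (div_eq_zero_iff).mp h with h' | h'
      · exact h'
      · norm_num at h'
    linarith
  have h2 : HasDerivAt Real.sqrt (1 / (2 * Real.sqrt ((1+u)/2))) ((1+u)/2) :=
    Real.hasDerivAt_sqrt hne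
  have := h2.comp u h1
  have heq : (1 / (4 * phi u)) = 1 / (2 * Real.sqrt ((1+u)/2)) * (1/2) := by unfold phi; ring
  rw [heq]; exact this

lemma hasDerivAt_dd (t : ℝ) : HasDerivAt dd (4 * t) t := by
  have : HasDerivAt (fun t : ℝ => 2 * t^2 - 1) (2 * (2 * t)) t := by
    simpa using (((hasDerivAt_pow 2 t)).const_mul 2).sub_const 1
  rw [show (4:ℝ)*t = 2*(2*t) by ring]; exact this

lemma bijOn_phi {a b : ℝ} (ha : -1 ≤ a) (hab : a ≤ b) :
    Set.BijOn phi (Set.Icc a b) (Set.Icc (phi a) (phi b)) := by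
  refine ⟨fun u hu => ⟨phi_mono ha hu.1, phi_mono (le_trans ha hu.1) hu.2⟩, ?_, ?_⟩
  · intro u hu v hv huv
    rcases lt_trichotomy u v with h | h | h
    · exact absurd huv (ne_of_lt (phi_strict (le_trans ha hu.1) h))
    · exact h
    · exact absurd huv.symm (ne_of_lt (phi_strict (le_trans ha hv.1) h))
  · intro v hv
    have hv0 : 0 ≤ v := le_trans (phi_nonneg a) hv.1
    refine ⟨dd v, ⟨?_, ?_⟩, phi_dd hv0⟩
    · have := dd_mono (phi_nonneg a) hv.1; rwa [dd_phi ha] at this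
    · have := dd_mono hv0 hv.2; rwa [dd_phi (le_trans ha hab)] at this

lemma bijOn_dd {a b : ℝ} (ha : 0 ≤ a) (hab : a ≤ b) :
    Set.BijOn dd (Set.Icc a b) (Set.Icc (dd a) (dd b)) := by
  refine ⟨fun u hu => ⟨dd_mono ha hu.1, dd_mono (le_trans ha hu.1) hu.2⟩, ?_, ?_⟩
  · intro u hu v hv huv
    unfold dd at huv
    nlinarith [hu.1, hv.1]
  · intro v hv
    have hv1 : -1 ≤ v := le_trans (by unfold dd; nlinarith) hv.1
    refine ⟨phi v, ⟨?_, ?_⟩, dd_phi hv1⟩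
    · have := phi_mono (by unfold dd; nlinarith) hv.1; rwa [phi_dd ha] at this
    · have := phi_mono hv1 hv.2; rwa [phi_dd (le_trans ha hab)] at this

lemma S0_eq {S : ℝ → ℝ} (hS : IsReflection 0 S) {y : ℝ} (hy : y ∈ Set.Icc (0:ℝ) 1) :
    S y = -y := by
  have := hS.2 y (by rwa [xseq_one])
  simpa [Q_zero_apply] using this

lemma rho_even {S : ℕ → ℝ → ℝ} {n : ℕ} {ρ : ℝ → ℝ} (hS : IsReflection 0 (S 0))
    (hρ : memW S n ρ) (hn : 1 ≤ n) (y : ℝ) (hy : y ∈ Set.Ioo (0:ℝ) 1) :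
    ρ y = ρ (-y) := by
  have h := hρ.2.2 0 hn y (by rwa [zero_add, xseq_one])
  have hev : S 0 =ᶠ[nhds y] fun t => -t :=
    Filter.eventuallyEq_of_mem (Ioo_mem_nhds hy.1 hy.2)
      (fun t ht => S0_eq hS ⟨ht.1.le, ht.2.le⟩)
  have hder : deriv (S 0) y = -1 := by
    rw [hev.deriv_eq]
    simpa using ((hasDerivAt_id y).neg).deriv
  rw [h, hder, S0_eq hS ⟨hy.1.le, hy.2.le⟩]
  ring

lemma rho_integrableOn {S : ℕ → ℝ → ℝ} {n : ℕ} {ρ : ℝ → ℝ} (hρ : memW S n ρ) :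
    MeasureTheory.IntegrableOn ρ (Set.Ioc (-1:ℝ) 1) := by
  have h : IntervalIntegrable ρ MeasureTheory.volume (-1) 1 := by
    by_contra h
    have h0 := intervalIntegral.integral_undef h
    rw [hρ.2.1] at h0
    exact one_ne_zero h0
  exact (intervalIntegrable_iff_integrableOn_Ioc_of_le (by norm_num)).mp h

lemma integrableOn_mul_rho {ρ : ℝ → ℝ} (hρ : MeasureTheory.IntegrableOn ρ (Set.Ioc (-1:ℝ) 1))
    {f : ℝ → ℝ} (hf : Continuous f) {s : Set ℝ} (hs : s ⊆ Set.Ioc (-1:ℝ) 1)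
    (hsm : MeasurableSet s) :
    MeasureTheory.IntegrableOn (fun x => f x * ρ x) s := by
  obtain ⟨C, hC⟩ := (isCompact_Icc (a := (-1:ℝ)) (b := 1)).exists_bound_of_continuousOn
    hf.continuousOn
  have hρs : MeasureTheory.IntegrableOn ρ s := hρ.mono_set hs
  refine MeasureTheory.Integrable.mono' ((hρs.abs).const_mul C) ?_ ?_
  · exact (hf.aestronglyMeasurable).mul hρs.1
  · rw [MeasureTheory.ae_restrict_iff' hsm]
    filter_upwards with x hx
    have hxI : x ∈ Set.Icc (-1:ℝ) 1 := Set.Ioc_subset_Icc_self (hs hx)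
    have := hC x hxI
    have : |f x| ≤ C := this
    rw [Real.norm_eq_abs, abs_mul]
    have h0 : (0:ℝ) ≤ |ρ x| := abs_nonneg _
    calc |f x| * |ρ x| ≤ C * |ρ x| := by nlinarith [abs_nonneg (f x)]
      _ = C * |ρ x| := rfl

lemma intervalIntegrable_mul_rho {ρ : ℝ → ℝ}
    (hρ : MeasureTheory.IntegrableOn ρ (Set.Ioc (-1:ℝ) 1))
    {f : ℝ → ℝ} (hf : Continuous f) {a b : ℝ} (ha : (-1:ℝ) ≤ a) (hb : b ≤ 1) (hab : a ≤ b) :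
    IntervalIntegrable (fun x => f x * ρ x) MeasureTheory.volume a b := by
  rw [intervalIntegrable_iff_integrableOn_Ioc_of_le hab]
  exact integrableOn_mul_rho hρ hf (Set.Ioc_subset_Ioc ha hb) measurableSet_Ioc

lemma X_symm {S : ℕ → ℝ → ℝ} {X : Finset ℝ} (hS : IsReflection 0 (S 0))
    (hX1 : (X : Set ℝ) ⊆ Set.Ioo (-1 : ℝ) 1)
    (hX30 : S 0 '' ((X : Set ℝ) ∩ Set.Icc (xseq 1) 1)
      = (X : Set ℝ) ∩ Set.Icc (xseq 0) (xseq 1)) :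
    ∀ t ∈ X, -t ∈ X := by
  intro t ht
  have htI := hX1 ht
  rcases le_or_gt 0 t with h | h
  · have h1 : t ∈ (X : Set ℝ) ∩ Set.Icc (xseq 1) 1 := ⟨ht, by rw [xseq_one]; exact ⟨h, htI.2.le⟩⟩
    have h2 : S 0 t ∈ (X : Set ℝ) ∩ Set.Icc (xseq 0) (xseq 1) := by
      rw [← hX30]; exact Set.mem_image_of_mem _ h1
    have h3 := h2.1
    rwa [S0_eq hS ⟨h, htI.2.le⟩] at h3
  · have h1 : t ∈ (X : Set ℝ) ∩ Set.Icc (xseq 0) (xseq 1) := by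
      refine ⟨ht, ?_⟩
      rw [xseq_zero, xseq_one]; exact ⟨htI.1.le, h.le⟩
    rw [← hX30] at h1
    obtain ⟨s, hs, hst⟩ := h1
    have hs2 : s ∈ Set.Icc (0:ℝ) 1 := by
      have := hs.2; rwa [xseq_one] at this
    rw [S0_eq hS hs2] at hst
    rw [show -t = s by linarith]
    exact hs.1

lemma sum_odd_pow_eq_zero (X : Finset ℝ) (hsym : ∀ t ∈ X, -t ∈ X) {j : ℕ} (hj : Odd j) :
    ∑ t ∈ X, t^j = 0 := by
  refine Finset.sum_involution (fun a _ => -a) ?_ ?_ (fun a ha => hsym a ha) ?_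
  · intro a ha
    rw [hj.neg_pow]; ring
  · intro a ha hfa hcontra
    have ha0 : -a = a := hcontra
    have : a = 0 := by linarith
    rw [this] at hfa
    exact hfa (zero_pow hj.pos.ne')
  · intro a ha; ring

lemma integral_split {ρ f : ℝ → ℝ} (heven : ∀ y ∈ Set.Ioo (0:ℝ) 1, ρ y = ρ (-y))
    (h1 : IntervalIntegrable (fun x => f x * ρ x) MeasureTheory.volume (-1) 0)
    (h2 : IntervalIntegrable (fun x => f x * ρ x) MeasureTheory.volume 0 1)
    (h3 : IntervalIntegrable (fun x => f (-x) * ρ x) MeasureTheory.volume 0 1) :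
    ∫ x in (-1:ℝ)..1, f x * ρ x = ∫ x in (0:ℝ)..1, (f x + f (-x)) * ρ x := by
  have hsplit := intervalIntegral.integral_add_adjacent_intervals h1 h2
  have hneg : (∫ x in (-1:ℝ)..0, f x * ρ x) = ∫ x in (0:ℝ)..1, f (-x) * ρ (-x) := by
    rw [intervalIntegral.integral_comp_neg (fun x => f x * ρ x)]
    norm_num
  have hae : (∫ x in (0:ℝ)..1, f (-x) * ρ (-x)) = ∫ x in (0:ℝ)..1, f (-x) * ρ x := by
    apply intervalIntegral.integral_congr_ae
    have h1m : ∀ᵐ (x:ℝ), x ∉ ({1} : Set ℝ) :=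
      MeasureTheory.measure_eq_zero_iff_ae_notMem.mp (MeasureTheory.measure_singleton 1)
    filter_upwards [h1m] with x hx hxI
    rw [Set.uIoc_of_le (by norm_num : (0:ℝ) ≤ 1)] at hxI
    have hx1 : x < 1 := lt_of_le_of_ne hxI.2 (by simpa using hx)
    rw [← heven x ⟨hxI.1, hx1⟩]
  rw [← hsplit, hneg, hae, ← intervalIntegral.integral_add h3 h2]
  congr 1
  funext x
  ring

lemma even_moment {S : ℕ → ℝ → ℝ} {n : ℕ} {ρ : ℝ → ℝ} (hS : IsReflection 0 (S 0))
    (hρ : memW S n ρ) (hn : 1 ≤ n) {f : ℝ → ℝ} (hf : Continuous f)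
    (hfe : ∀ x, f (-x) = f x) :
    ∫ x in (-1:ℝ)..1, f x * ρ x = 2 * ∫ x in (0:ℝ)..1, f x * ρ x := by
  have hint := rho_integrableOn hρ
  have hcont : Continuous fun x : ℝ => f (-x) := hf.comp continuous_neg
  rw [integral_split (fun y hy => rho_even hS hρ hn y hy)
    (intervalIntegrable_mul_rho hint hf (by norm_num) (by norm_num) (by norm_num))
    (intervalIntegrable_mul_rho hint hf (by norm_num) (by norm_num) (by norm_num))
    (intervalIntegrable_mul_rho hint hcont (by norm_num) (by norm_num) (by norm_num))]
  rw [← intervalIntegral.integral_const_mul]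
  congr 1
  funext x
  rw [hfe x]
  ring

lemma odd_moment {S : ℕ → ℝ → ℝ} {n : ℕ} {ρ : ℝ → ℝ} (hS : IsReflection 0 (S 0))
    (hρ : memW S n ρ) (hn : 1 ≤ n) {j : ℕ} (hj : Odd j) :
    ∫ x in (-1:ℝ)..1, x^j * ρ x = 0 := by
  have hint := rho_integrableOn hρ
  have hf : Continuous fun x : ℝ => x^j := continuous_pow j
  have hcont : Continuous fun x : ℝ => (-x)^j := hf.comp continuous_neg
  rw [integral_split (f := fun x => x^j) (fun y hy => rho_even hS hρ hn y hy)
    (intervalIntegrable_mul_rho hint hf (by norm_num) (by norm_num) (by norm_num))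
    (intervalIntegrable_mul_rho hint hf (by norm_num) (by norm_num) (by norm_num))
    (intervalIntegrable_mul_rho hint hcont (by norm_num) (by norm_num) (by norm_num))]
  have : ∀ x : ℝ, (x^j + (-x)^j) * ρ x = 0 := by
    intro x
    rw [hj.neg_pow]
    ring
  simp only [this]
  simp

lemma phi_one : phi 1 = 1 := by
  unfold phi; norm_num

lemma dd_xseq (k : ℕ) : dd (xseq (k+1)) = xseq k := by
  unfold dd; exact d_xseq k

lemma dd_one : dd 1 = 1 := by unfold dd; norm_num

lemma Q_dd (k : ℕ) (t : ℝ) : Q k (dd t) = Q (k+1) t := (Q_succ k t).symm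

noncomputable def rt (ρ : ℝ → ℝ) (u : ℝ) : ℝ := ρ (phi u) / (2 * phi u)
noncomputable def St (S : ℕ → ℝ → ℝ) (k : ℕ) (u : ℝ) : ℝ := dd (S (k+1) (phi u))

lemma bijOn_phi_interval (k : ℕ) :
    Set.BijOn phi (Set.Icc (xseq (k+1)) 1) (Set.Icc (xseq (k+2)) 1) := by
  have := bijOn_phi (a := xseq (k+1)) (b := 1) (by linarith [(xseq_mem (k+1)).1]) (xseq_lt_one (k+1)).le
  rwa [phi_xseq, phi_one] at this

lemma St_isReflection {S : ℕ → ℝ → ℝ} (k : ℕ) (hS : IsReflection (k+1) (S (k+1))) :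
    IsReflection k (St S k) := by
  constructor
  · have hphi := bijOn_phi_interval k
    have hd : Set.BijOn dd (Set.Icc (xseq (k+1)) (xseq (k+2))) (Set.Icc (xseq k) (xseq (k+1))) := by
      have := bijOn_dd (a := xseq (k+1)) (b := xseq (k+2)) (xseq_succ_nonneg k) (xseq_lt_succ (k+1)).le
      rwa [dd_xseq, dd_xseq] at this
    have := hd.comp (hS.1.comp hphi)
    exact this
  · intro u hu
    have hu1 : -1 ≤ u := le_trans (xseq_mem (k+1)).1 hu.1
    have hphiu : phi u ∈ Set.Icc (xseq (k+2)) 1 := (bijOn_phi_interval k).mapsTo hu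
    show Q k (dd (S (k+1) (phi u))) = -(Q k u)
    rw [Q_dd, hS.2 (phi u) hphiu, ← dd_phi hu1, Q_dd, dd_phi hu1]

lemma St_rt_identity {S : ℕ → ℝ → ℝ} {ρ : ℝ → ℝ} (k : ℕ)
    (hS : IsReflection (k+1) (S (k+1)))
    (hid : ∀ y ∈ Set.Ioo (xseq (k+2)) 1, ρ y = -(ρ (S (k+1) y) * deriv (S (k+1)) y)) :
    ∀ u ∈ Set.Ioo (xseq (k+1)) 1, rt ρ u = -(rt ρ (St S k u) * deriv (St S k) u) := by
  intro u hu
  have hu0 : 0 ≤ u := le_trans (xseq_succ_nonneg k) hu.1.le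
  have hu1 : (-1:ℝ) < u := by linarith
  set y := phi u with hy_def
  have hy : y ∈ Set.Ioo (xseq (k+2)) 1 := by
    constructor
    · rw [← phi_xseq (k+1)]
      exact phi_strict (xseq_mem (k+1)).1 hu.1
    · rw [← phi_one]
      exact phi_strict (by linarith) hu.2
  have hy0 : 0 < y := lt_of_le_of_lt (xseq_succ_nonneg (k+1)) hy.1
  set s := S (k+1) y with hs_def
  have hs : s ∈ Set.Ioo (xseq (k+1)) (xseq (k+2)) := refl_mem_Ioo hS hy
  have hs0 : 0 < s := lt_of_le_of_lt (xseq_succ_nonneg k) hs.1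
  have hddy : dd y = u := dd_phi hu1.le
  have hSt_val : St S k u = dd s := rfl
  have hrtSt : rt ρ (St S k u) = ρ s / (2 * s) := by
    rw [hSt_val]; unfold rt; rw [phi_dd hs0.le]
  have hrt_u : rt ρ u = ρ y / (2 * y) := rfl
  -- eventual equality: S (k+1) = phi ∘ St S k ∘ dd near y
  have hev : S (k+1) =ᶠ[nhds y] fun y' => phi (St S k (dd y')) := by
    apply Filter.eventuallyEq_of_mem (Ioo_mem_nhds hy.1 hy.2)
    intro y' hy'
    have hy'0 : (0:ℝ) ≤ y' := le_trans (xseq_succ_nonneg (k+1)) hy'.1.le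
    have hmem : S (k+1) y' ∈ Set.Icc (xseq (k+1)) (xseq (k+2)) :=
      hS.1.mapsTo ⟨hy'.1.le, hy'.2.le⟩
    have h1 : (0:ℝ) ≤ S (k+1) y' := le_trans (xseq_succ_nonneg k) hmem.1
    show S (k+1) y' = phi (dd (S (k+1) (phi (dd y'))))
    rw [phi_dd hy'0, phi_dd h1]
  by_cases hdiff : DifferentiableAt ℝ (S (k+1)) y
  · set D := deriv (S (k+1)) y with hD_def
    have hD : HasDerivAt (S (k+1)) D y := hdiff.hasDerivAt
    have h1 : HasDerivAt phi (1 / (4 * y)) u := by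
      have := hasDerivAt_phi hu1
      rwa [← hy_def] at this
    have h2 : HasDerivAt dd (4 * s) s := hasDerivAt_dd s
    have hcomp1 : HasDerivAt (fun u' => S (k+1) (phi u')) (D * (1 / (4 * y))) u := by
      have := hD.comp u h1
      simpa [Function.comp_def, ← hy_def] using this
    have hcomp2 : HasDerivAt (St S k) (4 * s * (D * (1 / (4 * y)))) u := by
      have := h2.comp u hcomp1
      exact this
    have hderSt : deriv (St S k) u = s * D / y := by
      rw [hcomp2.deriv]; field_simp
    have hρy : ρ y = -(ρ s * D) := hid y hy
    rw [hrt_u, hrtSt, hderSt, hρy]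
    field_simp
  · have hd0 : deriv (S (k+1)) y = 0 := deriv_zero_of_not_differentiableAt hdiff
    have hρy : ρ y = 0 := by rw [hid y hy, hd0]; ring
    have hndiff : ¬ DifferentiableAt ℝ (St S k) u := by
      intro hcon
      apply hdiff
      rw [hev.differentiableAt_iff]
      have hdds : (-1:ℝ) < dd s := by unfold dd; nlinarith
      have h3 : DifferentiableAt ℝ phi (St S k (dd y)) := by
        rw [hddy, hSt_val]
        exact (hasDerivAt_phi hdds).differentiableAt
      have h4 : DifferentiableAt ℝ (St S k) (dd y) := by rwa [hddy]
      have h5 : DifferentiableAt ℝ dd y := (hasDerivAt_dd y).differentiableAt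
      exact (h3.comp y (h4.comp y h5) : DifferentiableAt ℝ (phi ∘ (St S k ∘ dd)) y)
    have hderSt : deriv (St S k) u = 0 := deriv_zero_of_not_differentiableAt hndiff
    rw [hrt_u, hrtSt, hderSt, hρy]
    simp

lemma dd_image_Ioo : dd '' Set.Ioo (0:ℝ) 1 = Set.Ioo (-1:ℝ) 1 := by
  ext u
  constructor
  · rintro ⟨x, hx, rfl⟩
    constructor
    · unfold dd; nlinarith [hx.1, hx.2]
    · unfold dd; nlinarith [hx.1, hx.2]
  · intro hu
    refine ⟨phi u, ⟨?_, ?_⟩, dd_phi hu.1.le⟩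
    · unfold phi
      apply Real.sqrt_pos.mpr
      linarith [hu.1]
    · rw [← phi_one]
      exact phi_strict hu.1.le hu.2

lemma cov_eq (g h : ℝ → ℝ) (hgh : ∀ x ∈ Set.Ioo (0:ℝ) 1, |4*x| * g (dd x) = h x) :
    ∫ u in (-1:ℝ)..1, g u = ∫ x in (0:ℝ)..1, h x := by
  rw [intervalIntegral.integral_of_le (by norm_num : (-1:ℝ) ≤ 1),
    MeasureTheory.integral_Ioc_eq_integral_Ioo,
    intervalIntegral.integral_of_le (by norm_num : (0:ℝ) ≤ 1),
    MeasureTheory.integral_Ioc_eq_integral_Ioo]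
  rw [← dd_image_Ioo]
  rw [MeasureTheory.integral_image_eq_integral_abs_deriv_smul measurableSet_Ioo
    (fun x _ => (hasDerivAt_dd x).hasDerivWithinAt) ?_ g]
  · apply MeasureTheory.setIntegral_congr_fun measurableSet_Ioo
    intro x hx
    have := hgh x hx
    simpa [smul_eq_mul] using this
  · intro a ha b hb hab
    unfold dd at hab
    nlinarith [ha.1, hb.1]

lemma rt_memW {S : ℕ → ℝ → ℝ} {n : ℕ} {ρ : ℝ → ℝ}
    (hS : ∀ k < n+1, IsReflection k (S k)) (hρ : memW S (n+1) ρ) :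
    memW (St S) n (rt ρ) := by
  refine ⟨?_, ?_, ?_⟩
  · intro u hu
    have h1 : phi u ∈ Set.Ioo (0:ℝ) 1 := by
      constructor
      · exact Real.sqrt_pos.mpr (by linarith [hu.1])
      · rw [← phi_one]; exact phi_strict hu.1.le hu.2
    have h2 : 0 ≤ ρ (phi u) := hρ.1 (phi u) ⟨by linarith [h1.1], h1.2⟩
    unfold rt
    exact div_nonneg h2 (by linarith [h1.1])
  · have hcov : (∫ u in (-1:ℝ)..1, rt ρ u) = ∫ x in (0:ℝ)..1, 2 * ρ x := by
      apply cov_eq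
      intro x hx
      unfold rt
      rw [phi_dd hx.1.le, abs_of_pos (by linarith [hx.1] : (0:ℝ) < 4*x)]
      field_simp [ne_of_gt hx.1]
      ring
    have heven : (∫ x in (-1:ℝ)..1, (1:ℝ) * ρ x) = 2 * ∫ x in (0:ℝ)..1, (1:ℝ) * ρ x :=
      even_moment (hS 0 (by omega)) hρ (by omega) continuous_const (fun _ => rfl)
    simp only [one_mul] at heven
    rw [hcov, intervalIntegral.integral_const_mul, ← heven, hρ.2.1]
  · intro k hk
    exact St_rt_identity k (hS (k+1) (by omega)) (hρ.2.2 (k+1) (by omega))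

lemma poly_linearity {ρ : ℝ → ℝ} (hint : MeasureTheory.IntegrableOn ρ (Set.Ioc (-1:ℝ) 1))
    (X : Finset ℝ) (D : ℕ)
    (hmono : ∀ j, j ≤ D → (∫ x in (-1:ℝ)..1, x^j * ρ x) = (1/(X.card:ℝ)) * ∑ t ∈ X, t^j)
    (P : Polynomial ℝ) (hP : P.natDegree ≤ D) :
    (∫ x in (-1:ℝ)..1, P.eval x * ρ x) = (1/(X.card:ℝ)) * ∑ t ∈ X, P.eval t := by
  have hPd : P.natDegree < D + 1 := Nat.lt_succ_of_le hP
  have h1 : ∀ x : ℝ, P.eval x * ρ x = ∑ j ∈ Finset.range (D+1), P.coeff j * (x^j * ρ x) := by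
    intro x
    rw [Polynomial.eval_eq_sum_range' hPd, Finset.sum_mul]
    apply Finset.sum_congr rfl; intro j _; ring
  rw [intervalIntegral.integral_congr (fun x _ => h1 x)]
  rw [intervalIntegral.integral_finset_sum (fun j _ => by
    have h := intervalIntegrable_mul_rho hint
      (f := fun x => P.coeff j * x^j) (continuous_const.mul (continuous_pow j))
      (le_refl (-1:ℝ)) (le_refl (1:ℝ)) (by norm_num)
    simpa [mul_assoc] using h)]
  have h2 : ∀ j ∈ Finset.range (D+1),
      (∫ x in (-1:ℝ)..1, P.coeff j * (x^j * ρ x))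
        = P.coeff j * ((1/(X.card:ℝ)) * ∑ t ∈ X, t^j) := by
    intro j hj
    rw [intervalIntegral.integral_const_mul,
      hmono j (Nat.lt_succ_iff.mp (Finset.mem_range.mp hj))]
  rw [Finset.sum_congr rfl h2]
  calc ∑ j ∈ Finset.range (D+1), P.coeff j * ((1/(X.card:ℝ)) * ∑ t ∈ X, t^j)
      = ∑ j ∈ Finset.range (D+1), ∑ t ∈ X, (1/(X.card:ℝ)) * (P.coeff j * t^j) := by
        apply Finset.sum_congr rfl; intro j _
        rw [Finset.mul_sum, Finset.mul_sum]
        apply Finset.sum_congr rfl; intro t _; ring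
    _ = ∑ t ∈ X, ∑ j ∈ Finset.range (D+1), (1/(X.card:ℝ)) * (P.coeff j * t^j) :=
        Finset.sum_comm
    _ = (1/(X.card:ℝ)) * ∑ t ∈ X, P.eval t := by
        rw [Finset.mul_sum]
        apply Finset.sum_congr rfl; intro t _
        rw [← Finset.mul_sum]
        congr 1
        exact (Polynomial.eval_eq_sum_range' hPd t).symm

lemma half_avg (a s : ℝ) (ha : a ≠ 0) : 1/(2*a) * (2*s) = 1/a * s := by
  field_simp

lemma dd_strict {u v : ℝ} (hu : 0 ≤ u) (huv : u < v) : dd u < dd v := by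
  unfold dd; nlinarith

lemma xseq_pos2 (k : ℕ) : 0 < xseq (k+2) := by
  rw [xseq_succ]
  exact Real.sqrt_pos.mpr (by linarith [xseq_succ_nonneg k])

theorem moments : ∀ n : ℕ, 1 ≤ n → ∀ S : ℕ → ℝ → ℝ, (∀ k < n, IsReflection k (S k)) →
    ∀ ρ : ℝ → ℝ, memW S n ρ →
    ∀ X : Finset ℝ, (X : Set ℝ) ⊆ Set.Ioo (-1:ℝ) 1 →
    (∃ x ∈ X, x ∈ Set.Icc (xseq n) 1) →
    (∀ k < n, S k '' ((X:Set ℝ) ∩ Set.Icc (xseq (k+1)) 1)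
      = (X:Set ℝ) ∩ Set.Icc (xseq k) (xseq (k+1))) →
    ∀ P : Polynomial ℝ, P.natDegree ≤ 2^n - 1 →
    (∫ x in (-1:ℝ)..1, P.eval x * ρ x) = (1/(X.card:ℝ)) * ∑ t ∈ X, P.eval t := by
  intro n hn
  induction n, hn using Nat.le_induction with
  | base =>
    intro S hS ρ hρ X hX1 hX2 hX3 P hP
    have hint := rho_integrableOn hρ
    have hS0 := hS 0 (by norm_num)
    have hsym := X_symm hS0 hX1 (hX3 0 (by norm_num))
    have hm : (X.card : ℝ) ≠ 0 := by
      obtain ⟨x, hx, _⟩ := hX2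
      exact Nat.cast_ne_zero.mpr (Finset.card_ne_zero_of_mem hx)
    apply poly_linearity hint X (2^1-1) ?_ P hP
    intro j hj
    norm_num at hj
    interval_cases j
    · simp only [pow_zero, one_mul]
      rw [hρ.2.1]
      rw [Finset.sum_const, nsmul_eq_mul, mul_one]
      field_simp
    · rw [odd_moment hS0 hρ (le_refl 1) odd_one,
        sum_odd_pow_eq_zero X hsym odd_one]
      simp
  | succ n hn ih =>
    intro S hS ρ hρ X hX1 hX2 hX3 P hP
    have hint := rho_integrableOn hρ
    have hS0 := hS 0 (by omega)
    have hsym := X_symm hS0 hX1 (hX3 0 (by omega))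
    have hm : (X.card : ℝ) ≠ 0 := by
      obtain ⟨x, hx, _⟩ := hX2
      exact Nat.cast_ne_zero.mpr (Finset.card_ne_zero_of_mem hx)
    apply poly_linearity hint X (2^(n+1)-1) ?_ P hP
    intro j hj
    rcases Nat.even_or_odd j with he | ho
    swap
    · rw [odd_moment hS0 hρ (by omega) ho, sum_odd_pow_eq_zero X hsym ho]
      simp
    obtain ⟨i, rfl⟩ := he
    have hi : i ≤ 2^n - 1 := by
      have h2 : 2^(n+1) = 2 * 2^n := by ring
      have h3 : 1 ≤ 2^n := Nat.one_le_two_pow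
      omega
    -- 0 is not a node
    have h0X : (0:ℝ) ∉ X := by
      intro h0
      have h1 : (0:ℝ) ∈ (X:Set ℝ) ∩ Set.Icc (xseq 1) (xseq 2) := by
        refine ⟨h0, ?_⟩
        rw [xseq_one]
        exact ⟨le_refl 0, (xseq_succ_nonneg 1)⟩
      rw [← hX3 1 (by omega)] at h1
      obtain ⟨y, hy, hy0⟩ := h1
      have hyI : y ∈ Set.Ioo (-1:ℝ) 1 := hX1 hy.1
      have hy2 : y ∈ Set.Icc (xseq 2) 1 := hy.2
      have hQ : Q 1 (S 1 y) = -(Q 1 y) := (hS 1 (by omega)).2 y hy2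
      rw [hy0] at hQ
      have hQ0 : Q 1 (0:ℝ) = -1 := by
        rw [Q_succ, Q_zero_apply]; norm_num
      have hQ1 : Q 1 y = 1 := by rw [hQ0] at hQ; linarith
      have hyIcc : y ∈ Set.Icc (xseq 1) 1 := ⟨le_trans (xseq_lt_succ 1).le hy2.1, hy2.2⟩
      have := Q_strictMonoOn 1 hyIcc (Set.right_mem_Icc.mpr (xseq_lt_one 1).le) hyI.2
      rw [hQ1, Q_one] at this
      exact lt_irrefl 1 this
    classical
    set A := X.filter (fun t => (0:ℝ) ≤ t) with hA
    set Xt := A.image dd with hXt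
    have hApos : ∀ t ∈ A, 0 < t ∧ t < 1 := by
      intro t ht
      have h1 := Finset.mem_filter.mp ht
      have h2 := hX1 (Finset.mem_coe.mpr h1.1)
      refine ⟨lt_of_le_of_ne h1.2 ?_, h2.2⟩
      intro h; exact h0X (h ▸ h1.1)
    have hddinjA : ∀ x ∈ A, ∀ y ∈ A, dd x = dd y → x = y := by
      intro x hx y hy hxy
      have h1 := hApos x hx
      have h2 := hApos y hy
      unfold dd at hxy
      nlinarith [h1.1, h2.1]
    have hBneg : X.filter (fun t => ¬ ((0:ℝ) ≤ t)) = A.image (fun t => -t) := by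
      ext t
      simp only [Finset.mem_filter, Finset.mem_image, hA]
      constructor
      · rintro ⟨htX, ht0⟩
        exact ⟨-t, ⟨hsym t htX, by linarith [lt_of_not_ge ht0]⟩, by ring⟩
      · rintro ⟨s, ⟨hsX, hs0⟩, rfl⟩
        have hs1 : 0 < s := lt_of_le_of_ne hs0 (fun h => h0X (h ▸ hsX))
        exact ⟨hsym s hsX, by linarith⟩
    have hcard : X.card = 2 * A.card := by
      have h1 := Finset.card_filter_add_card_filter_not
        (s := X) (p := fun t => (0:ℝ) ≤ t)
      rw [hBneg, Finset.card_image_of_injective _ neg_injective, ← hA] at h1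
      omega
    have hsumeq : ∀ f : ℝ → ℝ, (∀ t, f (-t) = f t) → ∑ t ∈ X, f t = 2 * ∑ t ∈ A, f t := by
      intro f hf
      have h1 := Finset.sum_filter_add_sum_filter_not X (fun t => (0:ℝ) ≤ t) f
      rw [hBneg, Finset.sum_image (fun x _ y _ h => neg_injective h)] at h1
      simp only [hf] at h1
      rw [← h1, ← hA]
      ring
    -- data for induction hypothesis
    have hS' : ∀ k < n, IsReflection k (St S k) :=
      fun k hk => St_isReflection k (hS (k+1) (by omega))
    have hρ' : memW (St S) n (rt ρ) := rt_memW hS hρ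
    have hXtA : (Xt : Set ℝ) = dd '' (A : Set ℝ) := Finset.coe_image
    have hXt1 : (Xt : Set ℝ) ⊆ Set.Ioo (-1:ℝ) 1 := by
      rw [hXtA]
      rintro u ⟨t, htA, rfl⟩
      obtain ⟨h1, h2⟩ := hApos t (Finset.mem_coe.mp htA)
      constructor
      · unfold dd; nlinarith
      · unfold dd; nlinarith
    have hXt2 : ∃ u ∈ Xt, u ∈ Set.Icc (xseq n) 1 := by
      obtain ⟨x, hx, hxI⟩ := hX2
      have hxpos : 0 < xseq (n+1) := by
        obtain ⟨m, rfl⟩ := Nat.exists_eq_add_of_le hn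
        have := xseq_pos2 m
        rwa [show m + 2 = 1 + m + 1 by omega] at this
      have hxA : x ∈ A := Finset.mem_filter.mpr ⟨hx, by linarith [hxI.1]⟩
      refine ⟨dd x, Finset.mem_image_of_mem dd hxA, ?_, ?_⟩
      · rw [← dd_xseq n]
        exact dd_mono (xseq_succ_nonneg n) hxI.1
      · rw [← dd_one]
        exact dd_mono (by linarith [hxI.1]) hxI.2
    have hXt3 : ∀ k < n, St S k '' ((Xt:Set ℝ) ∩ Set.Icc (xseq (k+1)) 1)
        = (Xt:Set ℝ) ∩ Set.Icc (xseq k) (xseq (k+1)) := by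
      intro k hk
      have hstep1 : (Xt:Set ℝ) ∩ Set.Icc (xseq (k+1)) 1
          = dd '' ((X:Set ℝ) ∩ Set.Icc (xseq (k+2)) 1) := by
        rw [hXtA]
        ext u
        constructor
        · rintro ⟨⟨t, htA, rfl⟩, hu⟩
          obtain ⟨ht0, ht1⟩ := hApos t (Finset.mem_coe.mp htA)
          refine ⟨t, ⟨(Finset.mem_filter.mp (Finset.mem_coe.mp htA)).1, ?_, ht1.le⟩, rfl⟩
          by_contra hc
          push_neg at hc
          have := dd_strict ht0.le hc
          rw [dd_xseq] at this
          linarith [hu.1]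
        · rintro ⟨t, ⟨htX, htI⟩, rfl⟩
          have ht0 : (0:ℝ) ≤ t := le_trans (xseq_pos2 k).le htI.1
          refine ⟨⟨t, Finset.mem_coe.mpr (Finset.mem_filter.mpr ⟨Finset.mem_coe.mp htX, ht0⟩), rfl⟩, ?_, ?_⟩
          · rw [← dd_xseq (k+1)]
            exact dd_mono (xseq_succ_nonneg (k+1)) htI.1
          · rw [← dd_one]
            exact dd_mono ht0 htI.2
      have hstep2 : St S k '' (dd '' ((X:Set ℝ) ∩ Set.Icc (xseq (k+2)) 1))
          = dd '' (S (k+1) '' ((X:Set ℝ) ∩ Set.Icc (xseq (k+2)) 1)) := by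
        rw [← Set.image_comp, ← Set.image_comp]
        apply Set.image_congr
        intro t ht
        have ht0 : (0:ℝ) ≤ t := le_trans (xseq_pos2 k).le ht.2.1
        show dd (S (k+1) (phi (dd t))) = dd (S (k+1) t)
        rw [phi_dd ht0]
      have hstep4 : dd '' ((X:Set ℝ) ∩ Set.Icc (xseq (k+1)) (xseq (k+2)))
          = (Xt:Set ℝ) ∩ Set.Icc (xseq k) (xseq (k+1)) := by
        rw [hXtA]
        ext u
        constructor
        · rintro ⟨t, ⟨htX, htI⟩, rfl⟩
          have ht0 : (0:ℝ) ≤ t := le_trans (xseq_succ_nonneg k) htI.1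
          refine ⟨⟨t, Finset.mem_coe.mpr (Finset.mem_filter.mpr ⟨Finset.mem_coe.mp htX, ht0⟩), rfl⟩, ?_, ?_⟩
          · rw [← dd_xseq k]
            exact dd_mono (xseq_succ_nonneg k) htI.1
          · rw [← dd_xseq (k+1)]
            exact dd_mono ht0 htI.2
        · rintro ⟨⟨t, htA, rfl⟩, hu⟩
          obtain ⟨ht0, ht1⟩ := hApos t (Finset.mem_coe.mp htA)
          refine ⟨t, ⟨(Finset.mem_filter.mp (Finset.mem_coe.mp htA)).1, ?_, ?_⟩, rfl⟩
          · by_contra hc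
            push_neg at hc
            have := dd_strict ht0.le hc
            rw [dd_xseq] at this
            linarith [hu.1]
          · by_contra hc
            push_neg at hc
            have := dd_strict (xseq_succ_nonneg (k+1)) hc
            rw [dd_xseq] at this
            linarith [hu.2]
      rw [hstep1, hstep2, hX3 (k+1) (by omega), hstep4]
    -- the polynomial R
    set R : Polynomial ℝ := (Polynomial.C (1/2:ℝ) * (Polynomial.X + 1))^i with hR
    have hRdeg : R.natDegree ≤ 2^n - 1 := by
      apply le_trans (Polynomial.natDegree_pow_le)
      have h1 : (Polynomial.C (1/2:ℝ) * (Polynomial.X + 1)).natDegree ≤ 1 := by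
        apply le_trans (Polynomial.natDegree_mul_le)
        have hx1 : (Polynomial.X + 1 : Polynomial ℝ).natDegree = 1 := by
          rw [← Polynomial.C_1, Polynomial.natDegree_X_add_C]
        simp [Polynomial.natDegree_C, hx1]
      calc i * (Polynomial.C (1/2:ℝ) * (Polynomial.X + 1)).natDegree ≤ i * 1 :=
            Nat.mul_le_mul_left i h1
        _ = i := Nat.mul_one i
        _ ≤ 2^n - 1 := hi
    have hReval : ∀ u : ℝ, R.eval u = ((u+1)/2)^i := by
      intro u
      rw [hR]
      simp
      congr 1
      ring
    have hRdd : ∀ t : ℝ, R.eval (dd t) = t^(i+i) := by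
      intro t
      rw [hReval]
      unfold dd
      rw [show (2*t^2 - 1 + 1)/2 = t^2 by ring, ← pow_mul]
      congr 1
      ring
    have hIH := ih (St S) hS' (rt ρ) hρ' Xt hXt1 hXt2 hXt3 R hRdeg
    -- integral chain
    have hL1 : (∫ x in (-1:ℝ)..1, x^(i+i) * ρ x) = 2 * ∫ x in (0:ℝ)..1, x^(i+i) * ρ x :=
      even_moment hS0 hρ (by omega) (continuous_pow _)
        (fun x => Even.neg_pow ⟨i, rfl⟩ x)
    have hL2 : (∫ u in (-1:ℝ)..1, R.eval u * rt ρ u) = ∫ x in (0:ℝ)..1, 2 * (x^(i+i) * ρ x) := by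
      apply cov_eq
      intro x hx
      rw [hRdd, abs_of_pos (by linarith [hx.1] : (0:ℝ) < 4*x)]
      unfold rt
      rw [phi_dd hx.1.le]
      field_simp [ne_of_gt hx.1]
      ring
    have hL : (∫ x in (-1:ℝ)..1, x^(i+i) * ρ x) = ∫ u in (-1:ℝ)..1, R.eval u * rt ρ u := by
      rw [hL1, hL2, intervalIntegral.integral_const_mul]
    -- sum chain
    have hsum1 : ∑ t ∈ X, t^(i+i) = 2 * ∑ t ∈ A, t^(i+i) :=
      hsumeq _ (fun t => Even.neg_pow ⟨i, rfl⟩ t)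
    have hsum2 : ∑ u ∈ Xt, R.eval u = ∑ t ∈ A, t^(i+i) := by
      rw [hXt, Finset.sum_image hddinjA]
      exact Finset.sum_congr rfl (fun t _ => hRdd t)
    have hcardXt : Xt.card = A.card := Finset.card_image_of_injOn hddinjA
    have hA0 : (A.card : ℝ) ≠ 0 := by
      have h1 : X.card ≠ 0 := fun h => hm (by exact_mod_cast h)
      have h2 : A.card ≠ 0 := by omega
      exact_mod_cast h2
    rw [hL, hIH, hcardXt, hsum2, hsum1, hcard]
    push_cast
    exact (half_avg _ _ hA0).symm

/-- Main quadrature theorem: for `ρ ∈ W_n` and a node set `X ⊂ (-1,1)` with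
`X ∩ [x_n,1] ≠ ∅` and `S_k(X ∩ [x_{k+1},1]) = X ∩ [x_k, x_{k+1}]` for `k < n`,
the equal-weight quadrature on `X` is exact on polynomials of degree `≤ 2^n - 1`. -/
theorem main_quadrature (n : ℕ) (hn : 1 ≤ n) (S : ℕ → ℝ → ℝ)
    (hS : ∀ k < n, IsReflection k (S k)) (ρ : ℝ → ℝ) (hρ : memW S n ρ)
    (X : Finset ℝ) (hX1 : (X : Set ℝ) ⊆ Set.Ioo (-1 : ℝ) 1)
    (hX2 : ∃ x ∈ X, x ∈ Set.Icc (xseq n) 1)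
    (hX3 : ∀ k < n,
      S k '' ((X : Set ℝ) ∩ Set.Icc (xseq (k + 1)) 1)
        = (X : Set ℝ) ∩ Set.Icc (xseq k) (xseq (k + 1)))
    (P : Polynomial ℝ) (hP : P.natDegree ≤ 2 ^ n - 1) :
    (∫ x in (-1 : ℝ)..1, P.eval x * ρ x) = (1 / (X.card : ℝ)) * ∑ x ∈ X, P.eval x :=
  moments n hn S hS ρ hρ X hX1 hX2 hX3 P hP
end
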